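/- arXiv:1012.0399 — 8 statements merged into one kernel-verified Lean document; each statement's English description precedes it below -/
import Mathlib

section
/- Suppose z ∈ ℂ \ σ(h₀) and the restriction of v + v r⁰(z) v to the subspace Π H is invertible as an operator on Π H; define Q(z) = v ∘ ((v + v r⁰(z) v)|_{ΠH})⁻¹ ∘ v. Then Q(z) r⁰(z) v = v r⁰(z) Q(z) = v - Q(z). -/
/-- The identity `Q(z) r0(z) v = v r0(z) Q(z) = v - Q(z)` for
`Q(z) = v ((v + v r0(z) v)|_{ΠH})⁻¹ v`, where `Π` is the orthogonal projection onto
`(ker v)^⊥` and `r0(z) = (h₀ - z)⁻¹` with `z ∉ σ(h₀)`. -/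
theorem Q_resolvent_identity {H : Type*} [NormedAddCommGroup H] [InnerProductSpace ℂ H]
    [CompleteSpace H]
    (h₀ v : H →L[ℂ] H) (hh₀ : IsSelfAdjoint h₀) (hv : IsSelfAdjoint v)
    (hfr : FiniteDimensional ℂ (LinearMap.range (v : H →ₗ[ℂ] H)))
    (z : ℂ) (hz : z ∉ spectrum ℂ h₀) (r0 : H →L[ℂ] H)
    (hr₀ : (h₀ - z • 1) ∘L r0 = 1 ∧ r0 ∘L (h₀ - z • 1) = 1)
    (B : H →L[ℂ] H)
    (hBmem : ∀ x : H, B x ∈ (LinearMap.ker (v : H →ₗ[ℂ] H))ᗮ)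
    (hB : ∀ x ∈ (LinearMap.ker (v : H →ₗ[ℂ] H))ᗮ,
      B ((v + v ∘L r0 ∘L v) x) = x ∧ (v + v ∘L r0 ∘L v) (B x) = x) :
    (v ∘L B ∘L v) ∘L r0 ∘L v = v - v ∘L B ∘L v ∧
    v ∘L r0 ∘L (v ∘L B ∘L v) = v - v ∘L B ∘L v := by
  have hrange : ∀ x : H, v x ∈ (LinearMap.ker (v : H →ₗ[ℂ] H))ᗮ := by
    intro x
    rw [Submodule.mem_orthogonal]
    intro u hu
    have h1 : ContinuousLinearMap.adjoint v = v := by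
      rw [← ContinuousLinearMap.star_eq_adjoint]; exact hv
    calc inner ℂ u (v x) = inner ℂ ((ContinuousLinearMap.adjoint v) u) x := by
          rw [ContinuousLinearMap.adjoint_inner_left]
      _ = inner ℂ (v u) x := by rw [h1]
      _ = (0 : ℂ) := by
          rw [show v u = 0 from LinearMap.mem_ker.mp hu, inner_zero_left]
  have hclosed : IsClosed ((LinearMap.ker (v : H →ₗ[ℂ] H) : Submodule ℂ H) : Set H) :=
    ContinuousLinearMap.isClosed_ker v
  -- projection onto (ker v)ᗮ
  have hker : ∀ x : H,
      v x = v ((LinearMap.ker (v : H →ₗ[ℂ] H))ᗮ.orthogonalProjectionOnto x : H) := by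
    intro x
    have hmem : x - ((LinearMap.ker (v : H →ₗ[ℂ] H))ᗮ.orthogonalProjectionOnto x : H)
        ∈ ((LinearMap.ker (v : H →ₗ[ℂ] H))ᗮ)ᗮ := Submodule.sub_starProjection_mem_orthogonal x
    rw [Submodule.orthogonal_orthogonal_eq_closure,
      hclosed.submodule_topologicalClosure_eq] at hmem
    have : v (x - ((LinearMap.ker (v : H →ₗ[ℂ] H))ᗮ.orthogonalProjectionOnto x : H)) = 0 :=
      LinearMap.mem_ker.mp hmem
    rw [map_sub, sub_eq_zero] at this
    exact this
  constructor
  · ext x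
    simp only [ContinuousLinearMap.comp_apply, ContinuousLinearMap.sub_apply]
    set p : H := ((LinearMap.ker (v : H →ₗ[ℂ] H))ᗮ.orthogonalProjectionOnto x : H) with hp
    have hpmem : p ∈ (LinearMap.ker (v : H →ₗ[ℂ] H))ᗮ := (Submodule.orthogonalProjectionOnto _ x).2
    have h1 := (hB p hpmem).1
    simp only [ContinuousLinearMap.add_apply, ContinuousLinearMap.comp_apply] at h1
    rw [← hker x] at h1
    have h2 : B (v x) + B (v (r0 (v x))) = p := by
      rw [← map_add]
      exact h1
    have h3 : v (B (v x)) + v (B (v (r0 (v x)))) = v x := by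
      rw [← map_add, h2, ← hker x]
    rw [eq_sub_iff_add_eq, add_comm]
    exact h3
  · ext x
    simp only [ContinuousLinearMap.comp_apply, ContinuousLinearMap.sub_apply]
    have h1 := (hB (v x) (hrange x)).2
    simp only [ContinuousLinearMap.add_apply, ContinuousLinearMap.comp_apply] at h1
    rw [eq_sub_iff_add_eq, add_comm]
    exact h1
end

section
/- Suppose z ∈ ℂ \ σ(h₀) and the restriction of v + v r⁰(z) v to the subspace Π H is invertible as an operator on Π H; define Q(z) = v ∘ ((v + v r⁰(z) v)|_{ΠH})⁻¹ ∘ v. Then h - z is boundedly invertible and its inverse is r(z) = r⁰(z) - r⁰(z) Q(z) r⁰(z). -/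
/-- If the restriction of `v + v r⁰(z) v` to `ΠH = (ker v)^⊥` is invertible, then
`h - z` is boundedly invertible with inverse `r(z) = r⁰(z) - r⁰(z) Q(z) r⁰(z)`,
where `Q(z) = v ((v + v r⁰(z) v)|_{ΠH})⁻¹ v`. -/
theorem resolvent_formula {H : Type*} [NormedAddCommGroup H] [InnerProductSpace ℂ H]
    [CompleteSpace H]
    (h₀ v : H →L[ℂ] H) (hh₀ : IsSelfAdjoint h₀) (hv : IsSelfAdjoint v)
    (hfr : FiniteDimensional ℂ (LinearMap.range (v : H →ₗ[ℂ] H)))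
    (z : ℂ) (hz : z ∉ spectrum ℂ h₀) (r0 : H →L[ℂ] H)
    (hr0 : (h₀ - z • 1) ∘L r0 = 1 ∧ r0 ∘L (h₀ - z • 1) = 1)
    (B : H →L[ℂ] H)
    (hBmem : ∀ x : H, B x ∈ (LinearMap.ker (v : H →ₗ[ℂ] H))ᗮ)
    (hB : ∀ x ∈ (LinearMap.ker (v : H →ₗ[ℂ] H))ᗮ,
      B ((v + v ∘L r0 ∘L v) x) = x ∧ (v + v ∘L r0 ∘L v) (B x) = x) :
    ((h₀ + v) - z • 1) ∘L (r0 - r0 ∘L (v ∘L B ∘L v) ∘L r0) = 1 ∧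
    (r0 - r0 ∘L (v ∘L B ∘L v) ∘L r0) ∘L ((h₀ + v) - z • 1) = 1 := by
  haveI : CompleteSpace (LinearMap.ker (v : H →ₗ[ℂ] H)) :=
    (ContinuousLinearMap.isClosed_ker v).completeSpace_coe
  set A : H →L[ℂ] H := h₀ - z • 1 with hA
  set Q : H →L[ℂ] H := v ∘L B ∘L v with hQ
  have hA1 : A * r0 = 1 := hr0.1
  have hA2 : r0 * A = 1 := hr0.2
  -- range of v is orthogonal to ker v
  have hker : ∀ y : H, v y ∈ (LinearMap.ker (v : H →ₗ[ℂ] H))ᗮ := by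
    intro y
    intro w hw
    have hvw : v w = 0 := hw
    have := ContinuousLinearMap.adjoint_inner_left v y w
    rw [hv.adjoint_eq] at this
    rw [← this]
    simp [hvw]
  -- key identity 1 : Q + v r0 Q = v
  have K1 : Q + v * r0 * Q = v := by
    ext x
    have h2 := (hB (v x) (hker x)).2
    simp only [ContinuousLinearMap.add_apply, ContinuousLinearMap.comp_apply] at h2 ⊢
    simpa [hQ, ContinuousLinearMap.mul_apply, ContinuousLinearMap.comp_apply] using h2
  -- key identity 2 : Q + Q r0 v = v
  have id2 : ∀ x : H, v (B (v x + v (r0 (v x)))) = v x := by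
    intro x
    obtain ⟨a, ha, b, hb, hx⟩ :=
      (LinearMap.ker (v : H →ₗ[ℂ] H)).exists_add_mem_mem_orthogonal x
    have hva : v a = 0 := ha
    have h1 := (hB b hb).1
    simp only [ContinuousLinearMap.add_apply, ContinuousLinearMap.comp_apply] at h1
    have hvx : v x = v b := by rw [hx]; simp [hva]
    rw [hvx, h1]
  have K2 : Q + Q * r0 * v = v := by
    ext x
    have := id2 x
    rw [map_add B] at this
    simp only [ContinuousLinearMap.add_apply, ContinuousLinearMap.mul_apply, hQ,
      ContinuousLinearMap.comp_apply, map_add] at this ⊢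
    exact this
  have hK1 : v - (Q + v * r0 * Q) = 0 := sub_eq_zero.mpr K1.symm
  have hK2 : v - (Q + Q * r0 * v) = 0 := sub_eq_zero.mpr K2.symm
  have hsum : (h₀ + v) - z • 1 = A + v := by rw [hA]; abel
  constructor
  · show ((h₀ + v) - z • 1) * (r0 - r0 * Q * r0) = 1
    rw [hsum]
    calc (A + v) * (r0 - r0 * Q * r0)
        = A * r0 - (A * r0) * (Q * r0) + (v - (Q + v * r0 * Q)) * r0 + Q * r0 := by
          noncomm_ring
      _ = 1 := by rw [hA1, hK1]; noncomm_ring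
  · show (r0 - r0 * Q * r0) * ((h₀ + v) - z • 1) = 1
    rw [hsum]
    calc (r0 - r0 * Q * r0) * (A + v)
        = r0 * A - (r0 * Q) * (r0 * A) + r0 * (v - (Q + Q * r0 * v)) + r0 * Q := by
          noncomm_ring
      _ = 1 := by rw [hA2, hK2]; noncomm_ring
end

section
/- Let z ∈ ℂ \ σ(h₀). Then z is an eigenvalue of h if and only if there exists a nonzero vector ψ ∈ Π H with (v + v r⁰(z) v) ψ = 0. Moreover, the map ψ ↦ -r⁰(z) v ψ is a linear bijection from ker(v + v r⁰(z) v) ∩ Π H onto the eigenspace ker(h - z); in particular every eigenvector f of h for z satisfies Π f ≠ 0 and f = -r⁰(z) v (Π f). -/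
/-- Characterization of the eigenvalues of `h = h₀ + v` outside `σ(h₀)`:
`z` is an eigenvalue of `h` iff `v + v r⁰(z) v` has a nonzero kernel vector in
`ΠH = (ker v)^⊥`, and `ψ ↦ -r⁰(z) v ψ` is a linear bijection from
`ker(v + v r⁰(z) v) ∩ ΠH` onto `ker(h - z)`; in particular every eigenvector `f`
of `h` for `z` satisfies `Π f ≠ 0` and `f = -r⁰(z) v (Π f)`, where `Π` is the
orthogonal projection onto `(ker v)^⊥`. -/
theorem eigenvalue_characterization {H : Type*} [NormedAddCommGroup H]
    [InnerProductSpace ℂ H] [CompleteSpace H]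
    (h₀ v : H →L[ℂ] H) (hh₀ : IsSelfAdjoint h₀) (hv : IsSelfAdjoint v)
    (hfr : FiniteDimensional ℂ (LinearMap.range (v : H →ₗ[ℂ] H)))
    (z : ℂ) (hz : z ∉ spectrum ℂ h₀) (r0 : H →L[ℂ] H)
    (hr0 : (h₀ - z • 1) ∘L r0 = 1 ∧ r0 ∘L (h₀ - z • 1) = 1)
    (Proj : H →L[ℂ] H)
    (hProj : ∀ x : H, Proj x ∈ (LinearMap.ker (v : H →ₗ[ℂ] H))ᗮ ∧ x - Proj x ∈ ((LinearMap.ker (v : H →ₗ[ℂ] H))ᗮ)ᗮ) :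
    ((∃ f : H, f ≠ 0 ∧ (h₀ + v) f = z • f) ↔
      (∃ ψ ∈ (LinearMap.ker (v : H →ₗ[ℂ] H))ᗮ, ψ ≠ 0 ∧ (v + v ∘L r0 ∘L v) ψ = 0)) ∧
    (∀ ψ ∈ (LinearMap.ker (v : H →ₗ[ℂ] H))ᗮ, (v + v ∘L r0 ∘L v) ψ = 0 →
      (h₀ + v) (-(r0 (v ψ))) = z • (-(r0 (v ψ)))) ∧
    (∀ ψ₁ ∈ (LinearMap.ker (v : H →ₗ[ℂ] H))ᗮ, ∀ ψ₂ ∈ (LinearMap.ker (v : H →ₗ[ℂ] H))ᗮ,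
      (v + v ∘L r0 ∘L v) ψ₁ = 0 → (v + v ∘L r0 ∘L v) ψ₂ = 0 →
      -(r0 (v ψ₁)) = -(r0 (v ψ₂)) → ψ₁ = ψ₂) ∧
    (∀ f : H, (h₀ + v) f = z • f →
      ∃ ψ ∈ (LinearMap.ker (v : H →ₗ[ℂ] H))ᗮ, (v + v ∘L r0 ∘L v) ψ = 0 ∧ f = -(r0 (v ψ))) ∧
    (∀ f : H, f ≠ 0 → (h₀ + v) f = z • f → Proj f ≠ 0 ∧ f = -(r0 (v (Proj f)))) := by
  -- pointwise resolvent identities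
  have happ1 : ∀ x : H, (h₀ - z • 1) (r0 x) = x := fun x => by
    have := congrArg (fun T : H →L[ℂ] H => T x) hr0.1
    simpa using this
  have happ2 : ∀ x : H, r0 ((h₀ - z • 1) x) = x := fun x => by
    have := congrArg (fun T : H →L[ℂ] H => T x) hr0.2
    simpa using this
  -- eigen equation reformulation
  have heig : ∀ f : H, (h₀ + v) f = z • f ↔ (h₀ - z • (1 : H →L[ℂ] H)) f = -(v f) := by
    intro f
    simp only [ContinuousLinearMap.add_apply, ContinuousLinearMap.sub_apply,
      ContinuousLinearMap.smul_apply, ContinuousLinearMap.one_apply]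
    rw [eq_neg_iff_add_eq_zero, sub_add_eq_add_sub, sub_eq_zero]
  -- double orthogonal complement of the kernel
  have hoo : ((LinearMap.ker (v : H →ₗ[ℂ] H))ᗮ)ᗮ = LinearMap.ker (v : H →ₗ[ℂ] H) := by
    rw [Submodule.orthogonal_orthogonal_eq_closure]
    exact IsClosed.submodule_topologicalClosure_eq (ContinuousLinearMap.isClosed_ker v)
  -- a vector in (ker v)ᗮ killed by v is zero
  have hzero : ∀ ψ : H, ψ ∈ (LinearMap.ker (v : H →ₗ[ℂ] H))ᗮ → v ψ = 0 → ψ = 0 := by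
    intro ψ hmem hv0
    have hker : ψ ∈ LinearMap.ker (v : H →ₗ[ℂ] H) := hv0
    have := (Submodule.mem_orthogonal _ ψ).mp hmem ψ hker
    simpa [inner_self_eq_zero] using this
  -- kernel condition pointwise
  have hkc : ∀ ψ : H, (v + v ∘L r0 ∘L v) ψ = 0 ↔ v (r0 (v ψ)) = -(v ψ) := by
    intro ψ
    simp only [ContinuousLinearMap.add_apply, ContinuousLinearMap.comp_apply]
    rw [eq_neg_iff_add_eq_zero, add_comm]
  -- forward direction: ψ ↦ -(r0 (v ψ)) produces eigenvectors
  have hfwd : ∀ ψ : H, (v + v ∘L r0 ∘L v) ψ = 0 →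
      (h₀ + v) (-(r0 (v ψ))) = z • (-(r0 (v ψ))) := by
    intro ψ h0
    rw [heig, map_neg, happ1, map_neg, (hkc ψ).mp h0, neg_neg]
  -- every eigenvector satisfies f = -(r0 (v f))
  have hrep : ∀ f : H, (h₀ + v) f = z • f → f = -(r0 (v f)) := by
    intro f hf
    have := (heig f).mp hf
    have h2 := congrArg r0 this
    rw [happ2, map_neg] at h2
    exact h2
  -- v (Proj f) = v f
  have hvProj : ∀ f : H, v (Proj f) = v f := by
    intro f
    have hm : f - Proj f ∈ LinearMap.ker (v : H →ₗ[ℂ] H) := hoo ▸ (hProj f).2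
    have : v (f - Proj f) = 0 := hm
    rw [map_sub, sub_eq_zero] at this
    exact this.symm
  -- Proj f is a kernel vector of v + v r0 v when f is an eigenvector
  have hback : ∀ f : H, (h₀ + v) f = z • f →
      (v + v ∘L r0 ∘L v) (Proj f) = 0 ∧ f = -(r0 (v (Proj f))) := by
    intro f hf
    have hrf := hrep f hf
    constructor
    · rw [hkc, hvProj]
      have := congrArg v hrf
      rw [map_neg] at this
      exact neg_eq_iff_eq_neg.mp this.symm
    · rw [hvProj]; exact hrf
  refine ⟨?_, fun ψ _ h0 => hfwd ψ h0, ?_, ?_, ?_⟩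
  · constructor
    · rintro ⟨f, hf0, hf⟩
      refine ⟨Proj f, (hProj f).1, ?_, (hback f hf).1⟩
      intro hP0
      apply hf0
      have := (hback f hf).2
      rw [hP0, map_zero, map_zero, neg_zero] at this
      exact this
    · rintro ⟨ψ, hmem, hψ0, h0⟩
      refine ⟨-(r0 (v ψ)), ?_, hfwd ψ h0⟩
      intro hf0
      apply hψ0
      apply hzero ψ hmem
      have := congrArg (h₀ - z • (1 : H →L[ℂ] H)) (neg_eq_zero.mp hf0)
      rw [happ1, map_zero] at this
      exact this
  · intro ψ₁ hm1 ψ₂ hm2 h01 h02 heq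
    have hveq : v ψ₁ = v ψ₂ := by
      have := congrArg (h₀ - z • (1 : H →L[ℂ] H)) (neg_injective heq)
      rw [happ1, happ1] at this
      exact this
    have : ψ₁ - ψ₂ = 0 := by
      apply hzero _ (Submodule.sub_mem _ hm1 hm2)
      rw [map_sub, hveq, sub_self]
    exact sub_eq_zero.mp this
  · intro f hf
    exact ⟨Proj f, (hProj f).1, (hback f hf).1, (hback f hf).2⟩
  · intro f hf0 hf
    refine ⟨?_, (hback f hf).2⟩
    intro hP0
    apply hf0
    have := (hback f hf).2
    rw [hP0, map_zero, map_zero, neg_zero] at this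
    exact this
end

section
/- For every e ∈ (0,4) with e ≠ 2, the boundary value g₊(e; 0,0) = lim_{ε→0⁺} g(e + iε; 0,0) of the diagonal lattice Green's function has strictly positive imaginary part: Im g₊(e; 0,0) > 0. -/
open MeasureTheory Real Complex

/-- The lattice Green's function of the 2D discrete Laplacian:
`g(z; x₁, x₂) = (2π)⁻² ∫_{[-π,π]²} e^{-i(k₁x₁+k₂x₂)} / (ω(k) - z) dk`. -/
noncomputable def latticeGreen (z : ℂ) (x₁ x₂ : ℤ) : ℂ :=
  ((2 * Real.pi) ^ 2)⁻¹ •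
    ∫ k in Set.Icc ((-Real.pi, -Real.pi) : ℝ × ℝ) ((Real.pi, Real.pi) : ℝ × ℝ),
      Complex.exp (-Complex.I * ((k.1 : ℂ) * (x₁ : ℂ) + (k.2 : ℂ) * (x₂ : ℂ))) /
        (((2 - Real.cos k.1 - Real.cos k.2 : ℝ) : ℂ) - z)


lemma cos_lip (a b : ℝ) : |Real.cos a - Real.cos b| ≤ |a - b| := by
  rw [Real.cos_sub_cos]
  have h1 : |Real.sin ((a+b)/2)| ≤ 1 := Real.abs_sin_le_one _
  have h2 : |Real.sin ((a-b)/2)| ≤ |(a-b)/2| := Real.abs_sin_le_abs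
  have h3 : |(a-b)/2| = |a-b|/2 := by rw [abs_div]; norm_num
  calc |(-2) * Real.sin ((a+b)/2) * Real.sin ((a-b)/2)|
      = 2 * (|Real.sin ((a+b)/2)| * |Real.sin ((a-b)/2)|) := by
        rw [abs_mul, abs_mul]; ring_nf
    _ ≤ 2 * (1 * (|a-b|/2)) := by
        apply mul_le_mul_of_nonneg_left _ (by norm_num)
        exact mul_le_mul h1 (h3 ▸ h2) (abs_nonneg _) zero_le_one
    _ = |a - b| := by ring

lemma arccos_anti {x y : ℝ} (h : x ≤ y) : Real.arccos y ≤ Real.arccos x := by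
  unfold Real.arccos
  have := Real.monotone_arcsin h
  linarith

lemma im_integrand (e ε : ℝ) (k : ℝ × ℝ) :
    (Complex.exp (-Complex.I * ((k.1 : ℂ) * ((0:ℤ) : ℂ) + (k.2 : ℂ) * ((0:ℤ) : ℂ))) /
        (((2 - Real.cos k.1 - Real.cos k.2 : ℝ) : ℂ) - ((e : ℂ) + (ε : ℂ) * Complex.I))).im
    = ε / ((2 - Real.cos k.1 - Real.cos k.2 - e)^2 + ε^2) := by
  set ω : ℝ := 2 - Real.cos k.1 - Real.cos k.2 with hω
  simp only [Int.cast_zero, mul_zero, add_zero, zero_add, Complex.exp_zero, one_div]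
  rw [Complex.inv_im]
  simp only [Complex.normSq_apply, Complex.sub_re, Complex.sub_im, Complex.add_re,
    Complex.add_im, Complex.ofReal_re, Complex.ofReal_im, Complex.mul_re, Complex.mul_im,
    Complex.I_re, Complex.I_im]
  ring

set_option maxHeartbeats 1000000 in
lemma key (e : ℝ) (he0 : 0 < e) (he4 : e < 4) :
    ∃ A ρ : ℝ, 0 < A ∧ 0 < ρ ∧ ∀ ε : ℝ, 0 < ε → ε < ρ →
      A ≤ (latticeGreen ((e : ℂ) + ε * Complex.I) 0 0).im := by
  set c : ℝ := 2 - e with hc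
  have hcabs : |c| < 2 := abs_lt.2 ⟨by linarith, by linarith⟩
  set δ : ℝ := 1/2 - |c|/4 with hδdef
  have hδ0 : 0 < δ := by simp only [hδdef]; linarith
  have hδhalf : δ ≤ 1/2 := by have := abs_nonneg c; simp only [hδdef]; linarith
  have hc2 : -1 < c/2 ∧ c/2 < 1 := by
    constructor <;> [linarith [abs_lt.1 hcabs |>.1]; linarith [abs_lt.1 hcabs |>.2]]
  set b : ℝ := Real.arccos (c/2) with hb
  have hb0 : 0 ≤ b := Real.arccos_nonneg _
  have hbπ : b < Real.pi := by
    have := Real.strictAntiOn_arccos (Set.mem_Icc.2 ⟨le_refl _, by norm_num⟩)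
      (Set.mem_Icc.2 ⟨hc2.1.le, hc2.2.le⟩) hc2.1
    simpa [Real.arccos_neg_one] using this
  set ρ : ℝ := Real.arccos (1 - δ) with hρdef
  have hρ0 : 0 < ρ := Real.arccos_pos.2 (by linarith)
  set η : ℝ := min δ (Real.pi - b) with hηdef
  have hη0 : 0 < η := lt_min hδ0 (by linarith)
  refine ⟨((2 * Real.pi) ^ 2)⁻¹ * η, ρ, by positivity, hρ0, ?_⟩
  intro ε hε hερ
  -- notation
  set G : ℝ × ℝ → ℂ := fun k =>
    Complex.exp (-Complex.I * ((k.1 : ℂ) * ((0:ℤ) : ℂ) + (k.2 : ℂ) * ((0:ℤ) : ℂ))) /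
      (((2 - Real.cos k.1 - Real.cos k.2 : ℝ) : ℂ) - ((e : ℂ) + (ε : ℂ) * Complex.I)) with hG
  set F : ℝ × ℝ → ℝ := fun k => ε / ((2 - Real.cos k.1 - Real.cos k.2 - e)^2 + ε^2) with hF
  have hFc : Continuous F := by
    apply Continuous.div continuous_const (by fun_prop)
    intro k
    exact ne_of_gt (add_pos_of_nonneg_of_pos (sq_nonneg _) (pow_pos hε 2))
  have hGc : Continuous G := by
    apply Continuous.div (by fun_prop) (by fun_prop)
    intro k h
    have h2 := congrArg Complex.im h
    simp at h2
    exact absurd h2.symm (ne_of_lt hε)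
  have hF0 : ∀ k, 0 ≤ F k := fun k => div_nonneg hε.le
    (add_nonneg (sq_nonneg _) (sq_nonneg _))
  have hGint : IntegrableOn G (Set.Icc ((-Real.pi, -Real.pi) : ℝ × ℝ) (Real.pi, Real.pi)) :=
    hGc.continuousOn.integrableOn_compact isCompact_Icc
  have hFint : IntegrableOn F (Set.Icc ((-Real.pi, -Real.pi) : ℝ × ℝ) (Real.pi, Real.pi)) :=
    hFc.continuousOn.integrableOn_compact isCompact_Icc
  -- the sub-rectangle
  have hsub : Set.Icc b (b + η) ×ˢ Set.Icc (-Real.pi) Real.pi ⊆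
      Set.Icc ((-Real.pi, -Real.pi) : ℝ × ℝ) (Real.pi, Real.pi) := by
    rw [Set.Icc_prod_eq]
    dsimp only
    apply Set.prod_mono
    · exact Set.Icc_subset_Icc (by linarith [Real.pi_pos]) (by
        have : η ≤ Real.pi - b := min_le_right _ _; linarith)
    · exact le_refl _
  have hFintsub : IntegrableOn F (Set.Icc b (b + η) ×ˢ Set.Icc (-Real.pi) Real.pi) :=
    hFint.mono_set hsub
  -- step 1 : Im of the Green function
  rw [latticeGreen]
  rw [Complex.smul_im]
  have himint : (∫ x in Set.Icc ((-Real.pi, -Real.pi) : ℝ × ℝ) (Real.pi, Real.pi), (G x).im)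
      = (∫ x in Set.Icc ((-Real.pi, -Real.pi) : ℝ × ℝ) (Real.pi, Real.pi), G x).im :=
    integral_im (𝕜 := ℂ) hGint
  rw [← himint]
  have himeq : ∀ k ∈ Set.Icc ((-Real.pi, -Real.pi) : ℝ × ℝ) (Real.pi, Real.pi),
      (G k).im = F k := fun k _ => im_integrand e ε k
  rw [setIntegral_congr_fun measurableSet_Icc himeq]
  -- step 2 : reduce to the sub-rectangle
  have hmono : ∫ k in Set.Icc b (b + η) ×ˢ Set.Icc (-Real.pi) Real.pi, F k
      ≤ ∫ k in Set.Icc ((-Real.pi, -Real.pi) : ℝ × ℝ) (Real.pi, Real.pi), F k := by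
    apply setIntegral_mono_set hFint
    · exact Filter.Eventually.of_forall hF0
    · exact Filter.Eventually.of_forall hsub
  refine le_trans ?_ (mul_le_mul_of_nonneg_left hmono (by positivity))
  -- step 3 : Fubini
  have hprodrw : (volume : Measure (ℝ × ℝ)) = (volume : Measure ℝ).prod volume :=
    Measure.volume_eq_prod ℝ ℝ
  have hfub : ∫ k in Set.Icc b (b + η) ×ˢ Set.Icc (-Real.pi) Real.pi, F k
      = ∫ x in Set.Icc b (b + η), ∫ y in Set.Icc (-Real.pi) Real.pi, F (x, y) := by
    rw [hprodrw]
    exact setIntegral_prod F (by rwa [← hprodrw])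
  rw [hfub]
  -- step 4 : inner bound
  have hinner : ∀ x ∈ Set.Icc b (b + η),
      (1:ℝ) ≤ ∫ y in Set.Icc (-Real.pi) Real.pi, F (x, y) := by
    intro x hx
    obtain ⟨hx1, hx2⟩ := hx
    have hcb : Real.cos b = c/2 := Real.cos_arccos (by linarith [hc2.1]) (by linarith [hc2.2])
    have hcosx : |Real.cos x - c/2| ≤ δ := by
      calc |Real.cos x - c/2| = |Real.cos x - Real.cos b| := by rw [hcb]
        _ ≤ |x - b| := cos_lip x b
        _ ≤ δ := by
            rw [_root_.abs_of_nonneg (by linarith : (0:ℝ) ≤ x - b)]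
            have : η ≤ δ := min_le_left _ _
            linarith
    set t : ℝ := c - Real.cos x with htdef
    have ht : |t| ≤ 1 - δ := by
      have h1 := abs_le.1 hcosx
      have h2 : |c| = 2 - 4*δ := by rw [hδdef]; ring
      have h3 := le_abs_self c
      have h4 := neg_abs_le c
      rw [abs_le]
      exact ⟨by simp only [htdef]; linarith [h1.1, h1.2], by simp only [htdef]; linarith [h1.1, h1.2]⟩
    have ht1 := abs_le.1 ht
    set K : ℝ := Real.arccos t with hKdef
    have hcosK : Real.cos K = t := Real.cos_arccos (by linarith [ht1.1]) (by linarith [ht1.2])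
    have hK1 : ρ ≤ K := arccos_anti ht1.2
    have hK2 : K ≤ Real.pi - ρ := by
      have harc : Real.arccos (-(1-δ)) = Real.pi - ρ := by rw [Real.arccos_neg]
      rw [← harc]
      exact arccos_anti (by linarith [ht1.1])
    have hsub2 : Set.Icc (K - ε) (K + ε) ⊆ Set.Icc (-Real.pi) Real.pi :=
      Set.Icc_subset_Icc (by linarith [Real.pi_pos]) (by linarith)
    have hFyc : Continuous (fun y => F (x, y)) := hFc.comp (Continuous.prodMk_right x)
    have hFyint : IntegrableOn (fun y => F (x, y)) (Set.Icc (-Real.pi) Real.pi) :=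
      hFyc.continuousOn.integrableOn_compact isCompact_Icc
    calc (1:ℝ) = ∫ _y in Set.Icc (K - ε) (K + ε), 1/(2*ε) := by
          rw [setIntegral_const, measureReal_def, Real.volume_Icc, show K + ε - (K - ε) = 2*ε by ring,
            ENNReal.toReal_ofReal (by linarith), smul_eq_mul]
          field_simp
      _ ≤ ∫ y in Set.Icc (K - ε) (K + ε), F (x, y) := by
          apply setIntegral_mono_on
          · exact integrableOn_const (by rw [Real.volume_Icc]; exact ENNReal.ofReal_ne_top)
          · exact hFyint.mono_set hsub2
          · exact measurableSet_Icc
          intro y hy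
          obtain ⟨hy1, hy2⟩ := hy
          have heq : 2 - Real.cos x - Real.cos y - e = Real.cos K - Real.cos y := by
            rw [hcosK]
            simp only [htdef, hc]
            ring
          have hbnd : |2 - Real.cos x - Real.cos y - e| ≤ ε := by
            rw [heq]
            calc |Real.cos K - Real.cos y| ≤ |K - y| := cos_lip K y
              _ ≤ ε := by rw [abs_le]; exact ⟨by linarith, by linarith⟩
          have hbnd2 := abs_le.1 hbnd
          have hden : (2 - Real.cos x - Real.cos y - e)^2 + ε^2 ≤ 2*ε^2 := by nlinarith
          rw [div_le_div_iff₀ (by positivity)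
            (add_pos_of_nonneg_of_pos (sq_nonneg _) (pow_pos hε 2))]
          nlinarith
      _ ≤ ∫ y in Set.Icc (-Real.pi) Real.pi, F (x, y) := by
          apply setIntegral_mono_set hFyint
          · exact Filter.Eventually.of_forall (fun y => hF0 (x, y))
          · exact Filter.Eventually.of_forall hsub2

  -- step 5 : outer bound
  have hintinner : IntegrableOn (fun x => ∫ y in Set.Icc (-Real.pi) Real.pi, F (x, y))
      (Set.Icc b (b + η)) := by
    have := hFintsub
    rw [IntegrableOn, hprodrw, ← Measure.prod_restrict] at this
    exact this.integral_prod_left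
  have houter : η ≤ ∫ x in Set.Icc b (b + η), ∫ y in Set.Icc (-Real.pi) Real.pi, F (x, y) := by
    have h1 : ∫ x in Set.Icc b (b + η), (1:ℝ) = η := by
      rw [setIntegral_const, measureReal_def, Real.volume_Icc, show b + η - b = η by ring,
        ENNReal.toReal_ofReal hη0.le, smul_eq_mul, mul_one]
    calc η = ∫ x in Set.Icc b (b + η), (1:ℝ) := h1.symm
      _ ≤ _ := setIntegral_mono_on (integrableOn_const (by
            rw [Real.volume_Icc]; exact ENNReal.ofReal_ne_top)) hintinner
            measurableSet_Icc hinner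
  calc ((2 * Real.pi) ^ 2)⁻¹ * η ≤ ((2 * Real.pi) ^ 2)⁻¹ *
        ∫ x in Set.Icc b (b + η), ∫ y in Set.Icc (-Real.pi) Real.pi, F (x, y) := by
        apply mul_le_mul_of_nonneg_left houter (by positivity)
    _ = _ := rfl

open Filter Topology in
/-- The boundary value `g₊(e;0,0)` of the diagonal lattice Green's function has
strictly positive imaginary part for every `e ∈ (0,4)`, `e ≠ 2`. -/
theorem latticeGreen_boundary_im_pos
    (e : ℝ) (he : e ∈ Set.Ioo (0 : ℝ) 4) (he2 : e ≠ 2) (L : ℂ)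
    (hL : Tendsto (fun ε : ℝ => latticeGreen ((e : ℂ) + ε * Complex.I) 0 0)
      (𝓝[>] 0) (𝓝 L)) :
    0 < L.im := by
  obtain ⟨he0, he4⟩ := he
  obtain ⟨A, ρ, hA, hρ, hbound⟩ := key e he0 he4
  have hLim : Tendsto (fun ε : ℝ => (latticeGreen ((e : ℂ) + ε * Complex.I) 0 0).im)
      (𝓝[>] 0) (𝓝 L.im) := (Complex.continuous_im.tendsto L).comp hL
  have hev : ∀ᶠ ε in 𝓝[>] (0:ℝ), A ≤ (fun ε : ℝ => (latticeGreen ((e : ℂ) + ε * Complex.I) 0 0).im) ε := by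
    filter_upwards [Ioo_mem_nhdsGT_of_mem ⟨le_refl (0:ℝ), hρ⟩] with ε hε
    exact hbound ε hε.1 hε.2
  have hAL : A ≤ L.im := ge_of_tendsto hLim hev
  linarith
end

section
/- For every z ∈ ℂ with Im z > 0 and all integers m, n ≥ 0, the lattice Green's function admits the Bessel-function representation g(z; m, n) = i^{m+n+1} ∫₀^∞ e^{-it(2-z)} J_m(t) J_n(t) dt, where the Bessel function of integer order n is given by J_n(t) = ((-i)^n / (2π)) ∫_{-π}^{π} exp(-i n k + i t cos k) dk; in particular the integral on the right converges absolutely. -/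
open MeasureTheory Real Complex

lemma norm_exp_aux (w : ℂ) (t : ℝ) :
    ‖Complex.exp (-Complex.I * t * w)‖ = Real.exp (t * w.im) := by
  rw [Complex.norm_exp]
  congr 1
  simp only [Complex.neg_re, Complex.mul_re, Complex.mul_im, Complex.I_re, Complex.I_im,
    Complex.ofReal_re, Complex.ofReal_im, Complex.neg_im]
  ring

lemma exp_integrable (w : ℂ) (hw : w.im < 0) :
    IntegrableOn (fun t : ℝ => Complex.exp (-Complex.I * t * w)) (Set.Ioi 0) := by
  refine Integrable.mono' (g := fun t => Real.exp (-(-w.im) * t))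
    (exp_neg_integrableOn_Ioi 0 (by linarith))
    (Continuous.aestronglyMeasurable (by fun_prop)) ?_
  filter_upwards with t
  rw [norm_exp_aux]
  apply le_of_eq; ring_nf

lemma exp_deriv_aux (w : ℂ) (t : ℝ) :
    HasDerivAt (fun t : ℝ => Complex.exp (-Complex.I * t * w)) (-Complex.I * w * Complex.exp (-Complex.I * t * w)) t := by
  have h1 : HasDerivAt (fun t : ℝ => ((t : ℂ))) 1 t := (hasDerivAt_id t).ofReal_comp
  have h2 : HasDerivAt (fun t : ℝ => -Complex.I * t * w) (-Complex.I * w) t := by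
    simpa using (h1.const_mul (-Complex.I)).mul_const w
  simpa [mul_comm] using h2.cexp

lemma exp_tendsto_aux (w : ℂ) (hw : w.im < 0) :
    Filter.Tendsto (fun t : ℝ => Complex.exp (-Complex.I * t * w)) Filter.atTop (nhds 0) := by
  rw [tendsto_zero_iff_norm_tendsto_zero]
  simp only [norm_exp_aux]
  exact Real.tendsto_exp_atBot.comp (Filter.tendsto_id.atTop_mul_const_of_neg hw)

lemma exp_integral (w : ℂ) (hw : w.im < 0) :
    ∫ t in Set.Ioi (0:ℝ), Complex.exp (-Complex.I * t * w) = -Complex.I / w := by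
  have hw0 : w ≠ 0 := fun h => by simp [h] at hw
  have hIw : -Complex.I * w ≠ 0 := by simp [hw0, Complex.I_ne_zero]
  have := integral_Ioi_of_hasDerivAt_of_tendsto (a := (0:ℝ))
    (f := fun t : ℝ => (-Complex.I * w)⁻¹ * Complex.exp (-Complex.I * t * w))
    (f' := fun t : ℝ => Complex.exp (-Complex.I * t * w))
    (m := 0)
    (Continuous.continuousWithinAt (by fun_prop)) ?_ (exp_integrable w hw) ?_
  · rw [this]
    simp only [Complex.ofReal_zero, mul_zero, zero_mul, Complex.exp_zero, mul_one]
    field_simp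
    rw [Complex.I_sq]; ring
  · intro x hx
    have := (exp_deriv_aux w x).const_mul (-Complex.I * w)⁻¹
    exact this.congr_deriv (by rw [← mul_assoc, inv_mul_cancel₀ hIw, one_mul])
  · simpa using (exp_tendsto_aux w hw).const_mul (-Complex.I * w)⁻¹


/-- The Bessel function of integer order `n`, via its integral representation
`J_n(t) = ((-i)^n / (2π)) ∫_{-π}^{π} exp(-i n k + i t cos k) dk`. -/
noncomputable def besselJ (n : ℕ) (t : ℝ) : ℂ :=
  ((-Complex.I) ^ n / (2 * Real.pi)) *
    ∫ k in Set.Icc (-Real.pi) Real.pi,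
      Complex.exp (-Complex.I * (n : ℂ) * (k : ℂ) + Complex.I * (t : ℂ) * (Real.cos k : ℂ))

noncomputable def Jint (n : ℕ) (t : ℝ) : ℂ :=
  ∫ k in Set.Icc (-Real.pi) Real.pi,
      Complex.exp (-Complex.I * (n : ℂ) * (k : ℂ) + Complex.I * (t : ℂ) * (Real.cos k : ℂ))

lemma twopi_ne : (2 * (Real.pi : ℂ)) ≠ 0 := by
  simp [Real.pi_ne_zero, Complex.ofReal_ne_zero]

lemma Jint_eq (n : ℕ) (t : ℝ) : Jint n t = (2 * (Real.pi : ℂ)) * Complex.I ^ n * besselJ n t := by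
  have h1 : Complex.I ^ n * (-Complex.I) ^ n = 1 := by
    rw [← mul_pow]; simp
  rw [besselJ, Jint]
  rw [show (2 * (Real.pi : ℂ)) * Complex.I ^ n * (((-Complex.I) ^ n / (2 * Real.pi)) *
      (∫ k in Set.Icc (-Real.pi) Real.pi,
        Complex.exp (-Complex.I * (n : ℂ) * (k : ℂ) + Complex.I * (t : ℂ) * (Real.cos k : ℂ)))) =
      ((2 * (Real.pi : ℂ)) / (2 * Real.pi)) * ((Complex.I ^ n * (-Complex.I) ^ n) *
      (∫ k in Set.Icc (-Real.pi) Real.pi,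
        Complex.exp (-Complex.I * (n : ℂ) * (k : ℂ) + Complex.I * (t : ℂ) * (Real.cos k : ℂ)))) from by
    ring]
  rw [div_self twopi_ne, h1, one_mul, one_mul]


/-- Bessel-function representation of the lattice Green's function:
for `Im z > 0` and `m, n ≥ 0`,
`g(z; m, n) = i^(m+n+1) ∫₀^∞ e^{-it(2-z)} J_m(t) J_n(t) dt`,
the integral converging absolutely. -/
theorem latticeGreen_bessel (z : ℂ) (hz : 0 < z.im) (m n : ℕ) :
    IntegrableOn
      (fun t : ℝ => Complex.exp (-Complex.I * (t : ℂ) * (2 - z)) * besselJ m t * besselJ n t)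
      (Set.Ioi (0 : ℝ)) ∧
    latticeGreen z (m : ℤ) (n : ℤ) =
      Complex.I ^ (m + n + 1) *
        ∫ t in Set.Ioi (0 : ℝ),
          Complex.exp (-Complex.I * (t : ℂ) * (2 - z)) * besselJ m t * besselJ n t := by
  set ω : ℝ × ℝ → ℂ := fun k => (((2 - Real.cos k.1 - Real.cos k.2 : ℝ) : ℂ) - z) with hω
  have hωim : ∀ k : ℝ × ℝ, (ω k).im < 0 := by
    intro k; simp [hω, hz]
  set f : (ℝ × ℝ) → ℝ → ℂ := fun k t =>
    Complex.exp (-Complex.I * ((k.1 : ℂ) * ((m : ℤ) : ℂ) + (k.2 : ℂ) * ((n : ℤ) : ℂ))) *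
      Complex.exp (-Complex.I * t * ω k) with hfdef
  -- integrability on the product
  have hF : Integrable (Function.uncurry f)
      ((volume.restrict (Set.Icc ((-Real.pi, -Real.pi) : ℝ × ℝ) ((Real.pi, Real.pi) : ℝ × ℝ))).prod
        (volume.restrict (Set.Ioi (0 : ℝ)))) := by
    refine Integrable.mono'
      (g := fun p : (ℝ × ℝ) × ℝ => (1 : ℝ) * Real.exp (-z.im * p.2)) ?_ ?_ ?_
    · exact Integrable.mul_prod
        ((integrableOn_const_iff (C := (1:ℝ))).mpr (Or.inr (isCompact_Icc).measure_lt_top))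
        (exp_neg_integrableOn_Ioi 0 hz)
    · exact Continuous.aestronglyMeasurable (by fun_prop)
    · filter_upwards with p
      have h1 : ‖Complex.exp (-Complex.I * ((p.1.1 : ℂ) * ((m : ℤ) : ℂ) + (p.1.2 : ℂ) * ((n : ℤ) : ℂ)))‖ = 1 := by
        rw [Complex.norm_exp]
        simp [Complex.mul_re, Complex.mul_im]
      have h2 := norm_exp_aux (ω p.1) p.2
      rw [Function.uncurry, norm_mul, h1, h2, one_mul, one_mul]
      have h3 : (ω p.1).im = -z.im := by simp [hω]
      rw [h3]
      apply le_of_eq; ring_nf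
  -- inner k-integral factorizes
  have hinner : ∀ t : ℝ,
      (∫ k in Set.Icc ((-Real.pi, -Real.pi) : ℝ × ℝ) ((Real.pi, Real.pi) : ℝ × ℝ), f k t) =
      Complex.exp (-Complex.I * t * (2 - z)) * (Jint m t * Jint n t) := by
    intro t
    have hsplit : ∀ k : ℝ × ℝ, f k t =
        Complex.exp (-Complex.I * t * (2 - z)) *
          ((fun k₁ : ℝ => Complex.exp (-Complex.I * (m : ℂ) * (k₁ : ℂ) + Complex.I * (t : ℂ) * (Real.cos k₁ : ℂ))) k.1 *
           (fun k₂ : ℝ => Complex.exp (-Complex.I * (n : ℂ) * (k₂ : ℂ) + Complex.I * (t : ℂ) * (Real.cos k₂ : ℂ))) k.2) := by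
      intro k
      simp only [hfdef, hω]
      rw [← Complex.exp_add, ← Complex.exp_add, ← Complex.exp_add]
      congr 1
      push_cast
      ring
    rw [integral_congr_ae (Filter.Eventually.of_forall hsplit), integral_const_mul]
    congr 1
    rw [← Set.Icc_prod_Icc, Measure.volume_eq_prod, ← Measure.prod_restrict]
    exact integral_prod_mul
      (fun k₁ : ℝ => Complex.exp (-Complex.I * (m : ℂ) * (k₁ : ℂ) + Complex.I * (t : ℂ) * (Real.cos k₁ : ℂ)))
      (fun k₂ : ℝ => Complex.exp (-Complex.I * (n : ℂ) * (k₂ : ℂ) + Complex.I * (t : ℂ) * (Real.cos k₂ : ℂ)))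
  -- the t-integrand in terms of besselJ
  have hJ : ∀ t : ℝ, Complex.exp (-Complex.I * t * (2 - z)) * (Jint m t * Jint n t) =
      ((2 * (Real.pi : ℂ)) ^ 2 * Complex.I ^ (m + n)) *
        (Complex.exp (-Complex.I * (t : ℂ) * (2 - z)) * besselJ m t * besselJ n t) := by
    intro t
    rw [Jint_eq, Jint_eq, pow_add]
    ring
  have hconst : ((2 * (Real.pi : ℂ)) ^ 2 * Complex.I ^ (m + n)) ≠ 0 :=
    mul_ne_zero (pow_ne_zero _ twopi_ne) (pow_ne_zero _ Complex.I_ne_zero)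
  have hint1 : Integrable
      (fun t : ℝ => ∫ k in Set.Icc ((-Real.pi, -Real.pi) : ℝ × ℝ) ((Real.pi, Real.pi) : ℝ × ℝ), f k t)
      (volume.restrict (Set.Ioi (0 : ℝ))) := hF.swap.integral_prod_left
  have hint2 : IntegrableOn
      (fun t : ℝ => Complex.exp (-Complex.I * (t : ℂ) * (2 - z)) * besselJ m t * besselJ n t)
      (Set.Ioi (0 : ℝ)) := by
    have h3 : Integrable (fun t : ℝ =>
        ((2 * (Real.pi : ℂ)) ^ 2 * Complex.I ^ (m + n)) *
          (Complex.exp (-Complex.I * (t : ℂ) * (2 - z)) * besselJ m t * besselJ n t))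
        (volume.restrict (Set.Ioi (0 : ℝ))) := by
      refine hint1.congr (Filter.Eventually.of_forall fun t => ?_)
      exact (hinner t).trans (hJ t)
    have h4 := h3.const_mul (((2 * (Real.pi : ℂ)) ^ 2 * Complex.I ^ (m + n)))⁻¹
    refine h4.congr (Filter.Eventually.of_forall fun t => ?_)
    simp only [← mul_assoc, inv_mul_cancel₀ hconst, one_mul]
  refine ⟨hint2, ?_⟩
  have hIaux : ∀ c : ℂ, -(Complex.I * (c * Complex.I)) = c := by
    intro c
    rw [show -(Complex.I * (c * Complex.I)) = -(Complex.I * Complex.I) * c from by ring,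
      Complex.I_mul_I]
    ring
  have hptwise : ∀ k : ℝ × ℝ,
      Complex.exp (-Complex.I * ((k.1 : ℂ) * ((m : ℤ) : ℂ) + (k.2 : ℂ) * ((n : ℤ) : ℂ))) / ω k
        = Complex.I * ∫ t in Set.Ioi (0:ℝ), f k t := by
    intro k
    have h0 : ω k ≠ 0 := fun h => by simpa [h] using hωim k
    rw [show (∫ t in Set.Ioi (0:ℝ), f k t) =
        Complex.exp (-Complex.I * ((k.1 : ℂ) * ((m : ℤ) : ℂ) + (k.2 : ℂ) * ((n : ℤ) : ℂ))) *
          ∫ t in Set.Ioi (0:ℝ), Complex.exp (-Complex.I * t * ω k) from integral_const_mul _ _,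
      exp_integral (ω k) (hωim k)]
    field_simp
    rw [Complex.I_sq]; ring
  have swap :
      (∫ k in Set.Icc ((-Real.pi, -Real.pi) : ℝ × ℝ) ((Real.pi, Real.pi) : ℝ × ℝ),
        (∫ t in Set.Ioi (0:ℝ), f k t)) =
      ∫ t in Set.Ioi (0:ℝ),
        (∫ k in Set.Icc ((-Real.pi, -Real.pi) : ℝ × ℝ) ((Real.pi, Real.pi) : ℝ × ℝ), f k t) :=
    integral_integral_swap hF
  have key : (∫ k in Set.Icc ((-Real.pi, -Real.pi) : ℝ × ℝ) ((Real.pi, Real.pi) : ℝ × ℝ),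
      Complex.exp (-Complex.I * ((k.1 : ℂ) * ((m : ℤ) : ℂ) + (k.2 : ℂ) * ((n : ℤ) : ℂ))) /
        (((2 - Real.cos k.1 - Real.cos k.2 : ℝ) : ℂ) - z)) =
      Complex.I * (((2 * (Real.pi : ℂ)) ^ 2 * Complex.I ^ (m + n)) *
        ∫ t in Set.Ioi (0 : ℝ),
          Complex.exp (-Complex.I * (t : ℂ) * (2 - z)) * besselJ m t * besselJ n t) := by
    rw [integral_congr_ae (Filter.Eventually.of_forall hptwise), integral_const_mul, swap]
    congr 1
    rw [← integral_const_mul]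
    exact integral_congr_ae (Filter.Eventually.of_forall fun t => (hinner t).trans (hJ t))
  rw [latticeGreen, key, Complex.real_smul]
  rw [show ((m : ℤ) : ℂ) = (m : ℂ) from by push_cast; rfl] at *
  push_cast
  rw [pow_add, pow_add]
  have h2 : ((2 * (Real.pi : ℂ)) ^ 2) ≠ 0 := pow_ne_zero _ twopi_ne
  field_simp
  exact congrArg₂ (· * ·) (by ring) (congrArg _ (funext fun t => by ring_nf))
end

section
/- For every e ∈ (0,2) and every θ ∈ ℝ, there exists a unique K > 0 such that |K cos θ| + |K sin θ| < π and cos(K cos θ) + cos(K sin θ) = 2 - e. In other words, each ray from the origin meets the energy shell {k ∈ ℝ² : 2 - cos k₁ - cos k₂ = e} in exactly one point inside the square |k₁| + |k₂| < π. -/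
open Real

/-- Each ray from the origin meets the energy shell
`{k ∈ ℝ² : 2 - cos k₁ - cos k₂ = e}` in exactly one point inside the square
`|k₁| + |k₂| < π`, for every energy `e ∈ (0,2)`. -/
theorem energy_shell_ray_unique (e : ℝ) (he : e ∈ Set.Ioo (0 : ℝ) 2) (θ : ℝ) :
    ∃! K : ℝ, 0 < K ∧ |K * Real.cos θ| + |K * Real.sin θ| < Real.pi ∧
      Real.cos (K * Real.cos θ) + Real.cos (K * Real.sin θ) = 2 - e := by
  obtain ⟨he0, he2⟩ := he
  set a := |Real.cos θ| with ha
  set b := |Real.sin θ| with hb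
  have ha0 : 0 ≤ a := abs_nonneg _
  have hb0 : 0 ≤ b := abs_nonneg _
  have hab1 : 1 ≤ a + b := by
    nlinarith [Real.sin_sq_add_cos_sq θ, sq_abs (Real.cos θ), sq_abs (Real.sin θ),
      Real.abs_cos_le_one θ, Real.abs_sin_le_one θ]
  have habpos : 0 < a + b := by linarith
  set K₀ := Real.pi / (a + b) with hK0
  have hK0pos : 0 < K₀ := div_pos Real.pi_pos habpos
  have hK0ab : K₀ * (a + b) = Real.pi := by
    rw [hK0, div_mul_cancel₀ _ habpos.ne']
  set h : ℝ → ℝ := fun K => Real.cos (K * a) + Real.cos (K * b) with hh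
  have hcosrw : ∀ K : ℝ, 0 < K →
      Real.cos (K * Real.cos θ) + Real.cos (K * Real.sin θ) = h K := by
    intro K hK
    have h1 : Real.cos (K * Real.cos θ) = Real.cos (K * a) := by
      rw [← Real.cos_abs (K * Real.cos θ), abs_mul, abs_of_pos hK]
    have h2 : Real.cos (K * Real.sin θ) = Real.cos (K * b) := by
      rw [← Real.cos_abs (K * Real.sin θ), abs_mul, abs_of_pos hK]
    simp [hh, h1, h2]
  have habsrw : ∀ K : ℝ, 0 < K →
      |K * Real.cos θ| + |K * Real.sin θ| = K * (a + b) := by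
    intro K hK
    rw [abs_mul, abs_mul, abs_of_pos hK]; ring
  -- h is strictly decreasing on [0, K₀]
  have hanti : StrictAntiOn h (Set.Icc 0 K₀) := by
    apply strictAntiOn_of_deriv_neg (convex_Icc 0 K₀)
    · fun_prop
    · intro K hK
      rw [interior_Icc] at hK
      obtain ⟨hK1, hK2⟩ := hK
      have hda : HasDerivAt (fun K : ℝ => Real.cos (K * a)) (-Real.sin (K * a) * a) K :=
        (hasDerivAt_mul_const a).cos
      have hdb : HasDerivAt (fun K : ℝ => Real.cos (K * b)) (-Real.sin (K * b) * b) K :=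
        (hasDerivAt_mul_const b).cos
      have hd : HasDerivAt h (-Real.sin (K * a) * a + -Real.sin (K * b) * b) K := hda.add hdb
      rw [hd.deriv]
      have sinpos : ∀ c : ℝ, 0 < c → c ≤ a + b → 0 < Real.sin (K * c) := by
        intro c hc hcab
        apply Real.sin_pos_of_pos_of_lt_pi (by positivity)
        have h1 : K₀ ≤ Real.pi / c :=
          div_le_div_of_nonneg_left Real.pi_pos.le hc hcab
        have h2 : K < Real.pi / c := lt_of_lt_of_le hK2 h1
        exact (lt_div_iff₀ hc).mp h2
      have sinnn : ∀ c : ℝ, 0 ≤ c → c ≤ a + b → 0 ≤ c * Real.sin (K * c) := by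
        intro c hc hcab
        rcases eq_or_lt_of_le hc with hc' | hc'
        · simp [← hc']
        · exact le_of_lt (mul_pos hc' (sinpos c hc' hcab))
      have key : 0 < a * Real.sin (K * a) + b * Real.sin (K * b) := by
        rcases lt_or_ge 0 a with hap | hap
        · have := mul_pos hap (sinpos a hap (by linarith))
          have := sinnn b hb0 (by linarith)
          linarith
        · have hbp : 0 < b := by linarith
          have := mul_pos hbp (sinpos b hbp (by linarith))
          have := sinnn a ha0 (by linarith)
          linarith
      nlinarith
  have h0val : h 0 = 2 := by norm_num [hh]
  have hK0val : h K₀ = 0 := by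
    have hab' : K₀ * b = Real.pi - K₀ * a := by
      have : K₀ * a + K₀ * b = Real.pi := by linarith [hK0ab]; 
      linarith
    rw [hh]
    simp only
    rw [hab', Real.cos_pi_sub]
    ring
  have hcont : ContinuousOn h (Set.Icc 0 K₀) := by fun_prop
  have hmem : (2 - e) ∈ Set.Icc (h K₀) (h 0) := by
    rw [hK0val, h0val]; constructor <;> linarith
  obtain ⟨K, hKmem, hKval⟩ := intermediate_value_Icc' hK0pos.le hcont hmem
  obtain ⟨hKge, hKle⟩ := hKmem
  have hKpos : 0 < K := by
    rcases eq_or_lt_of_le hKge with hK' | hK'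
    · exfalso; rw [← hK'] at hKval; rw [h0val] at hKval; linarith
    · exact hK'
  have hKlt : K < K₀ := by
    rcases eq_or_lt_of_le hKle with hK' | hK'
    · exfalso; rw [hK'] at hKval; rw [hK0val] at hKval; linarith
    · exact hK'
  refine ⟨K, ⟨hKpos, ?_, ?_⟩, ?_⟩
  · rw [habsrw K hKpos, ← hK0ab]
    exact mul_lt_mul_of_pos_right hKlt habpos
  · rw [hcosrw K hKpos, hKval]
  · rintro K' ⟨hK'pos, hK'abs, hK'val⟩
    have hK'le : K' ≤ K₀ := by
      rw [habsrw K' hK'pos, ← hK0ab] at hK'abs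
      exact le_of_lt (lt_of_mul_lt_mul_right hK'abs habpos.le)
    have hval' : h K' = h K := by
      rw [← hcosrw K' hK'pos, hK'val, hKval]
    exact hanti.injOn ⟨hK'pos.le, hK'le⟩ ⟨hKge, hKle⟩ hval'
end

section
/- For every e ∈ (0,2) and φ ∈ [0, π/2], the phase function Φ(θ) = -K(e,θ) cos(φ - θ) has a stationary point in [0, π/2]: there exists θ_s ∈ [0, π/2] such that the derivative of θ ↦ K(e,θ) cos(φ - θ) vanishes at θ_s. -/
open Real

/-! ### Auxiliary lemmas -/

lemma mul_sin_pos_aux {x : ℝ} (h0 : x ≠ 0) (h : |x| < Real.pi) : 0 < x * Real.sin x := by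
  rcases lt_or_gt_of_ne h0 with hx | hx
  · have h1 : -Real.pi < x := by cases' abs_lt.1 h with a b; linarith
    have : Real.sin (-x) > 0 := Real.sin_pos_of_pos_of_lt_pi (by linarith) (by linarith)
    rw [Real.sin_neg] at this
    nlinarith
  · have h2 : x < Real.pi := by cases' abs_lt.1 h with a b; linarith
    have : Real.sin x > 0 := Real.sin_pos_of_pos_of_lt_pi hx h2
    nlinarith

lemma mul_sin_nonneg_aux {x : ℝ} (h : |x| < Real.pi) : 0 ≤ x * Real.sin x := by
  rcases eq_or_ne x 0 with rfl | h0
  · simp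
  · exact (mul_sin_pos_aux h0 h).le

lemma deriv_pos_aux {c s k : ℝ} (hcs : c ≠ 0 ∨ s ≠ 0) (hk : 0 < k)
    (hlt : |k * c| + |k * s| < Real.pi) :
    0 < c * Real.sin (k * c) + s * Real.sin (k * s) := by
  have hc : |k * c| < Real.pi := lt_of_le_of_lt (le_add_of_nonneg_right (abs_nonneg _)) hlt
  have hs : |k * s| < Real.pi := lt_of_le_of_lt (le_add_of_nonneg_left (abs_nonneg _)) hlt
  have h1 : 0 ≤ (k * c) * Real.sin (k * c) := mul_sin_nonneg_aux hc
  have h2 : 0 ≤ (k * s) * Real.sin (k * s) := mul_sin_nonneg_aux hs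
  have key : 0 < (k * c) * Real.sin (k * c) + (k * s) * Real.sin (k * s) := by
    rcases hcs with h | h
    · have : 0 < (k * c) * Real.sin (k * c) := mul_sin_pos_aux (by positivity) hc
      linarith
    · have : 0 < (k * s) * Real.sin (k * s) := mul_sin_pos_aux (by positivity) hs
      linarith
  nlinarith [key, hk]

lemma shell_strictAntiOn {c s M : ℝ} (hcs : c ≠ 0 ∨ s ≠ 0) (hM : 0 < M)
    (hMlt : M * |c| + M * |s| < Real.pi) :
    StrictAntiOn (fun t => Real.cos (t * c) + Real.cos (t * s)) (Set.Icc 0 M) := by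
  have habs : 0 < |c| + |s| := by
    rcases hcs with h | h
    · have := abs_pos.2 h; have := abs_nonneg s; linarith
    · have := abs_pos.2 h; have := abs_nonneg c; linarith
  apply strictAntiOn_of_deriv_neg (convex_Icc 0 M)
  · fun_prop
  · intro t ht
    rw [interior_Icc] at ht
    obtain ⟨ht0, htM⟩ := ht
    have hd : HasDerivAt (fun t => Real.cos (t * c) + Real.cos (t * s))
        (-Real.sin (t * c) * c + -Real.sin (t * s) * s) t :=
      ((hasDerivAt_mul_const c).cos).add ((hasDerivAt_mul_const s).cos)
    rw [hd.deriv]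
    have hlt : |t * c| + |t * s| < Real.pi := by
      have h1 : |t * c| = t * |c| := by rw [abs_mul, abs_of_pos ht0]
      have h2 : |t * s| = t * |s| := by rw [abs_mul, abs_of_pos ht0]
      rw [h1, h2]
      have : t * (|c| + |s|) < M * (|c| + |s|) := mul_lt_mul_of_pos_right htM habs
      nlinarith
    have := deriv_pos_aux hcs ht0 hlt
    nlinarith

lemma K_uniq_aux {c s K1 K2 : ℝ} (hcs : c ≠ 0 ∨ s ≠ 0)
    (h1 : 0 < K1) (h1' : |K1 * c| + |K1 * s| < Real.pi)
    (h2 : 0 < K2) (h2' : |K2 * c| + |K2 * s| < Real.pi)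
    (heq : Real.cos (K1 * c) + Real.cos (K1 * s) = Real.cos (K2 * c) + Real.cos (K2 * s)) :
    K1 = K2 := by
  set M := max K1 K2 with hMdef
  have hM : 0 < M := lt_max_of_lt_left h1
  have hMlt : M * |c| + M * |s| < Real.pi := by
    rcases max_cases K1 K2 with ⟨h, _⟩ | ⟨h, _⟩ <;> rw [hMdef, h]
    · calc K1 * |c| + K1 * |s| = |K1 * c| + |K1 * s| := by
            rw [abs_mul, abs_mul, abs_of_pos h1]
        _ < Real.pi := h1'
    · calc K2 * |c| + K2 * |s| = |K2 * c| + |K2 * s| := by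
            rw [abs_mul, abs_mul, abs_of_pos h2]
        _ < Real.pi := h2'
  exact (shell_strictAntiOn hcs hM hMlt).injOn ⟨h1.le, le_max_left _ _⟩
    ⟨h2.le, le_max_right _ _⟩ heq

noncomputable def shearEquivL (a b : ℝ) (hb : b ≠ 0) : (ℝ × ℝ) ≃ₗ[ℝ] (ℝ × ℝ) where
  toFun p := (p.1, a * p.1 + b * p.2)
  invFun q := (q.1, (q.2 - a * q.1) / b)
  map_add' p q := by ext <;> simp <;> ring
  map_smul' r p := by ext <;> simp <;> ring
  left_inv p := by ext <;> simp; field_simp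
  right_inv q := by ext <;> simp; field_simp; ring

noncomputable def shearEquiv (a b : ℝ) (hb : b ≠ 0) : (ℝ × ℝ) ≃L[ℝ] (ℝ × ℝ) :=
  (shearEquivL a b hb).toContinuousLinearEquiv

@[simp] lemma shearEquiv_apply (a b : ℝ) (hb : b ≠ 0) (p : ℝ × ℝ) :
    shearEquiv a b hb p = (p.1, a * p.1 + b * p.2) := rfl

/-- The radius function of the energy shell is differentiable (implicit function theorem). -/
lemma k_hasDerivAt {e : ℝ} (k : ℝ → ℝ)
    (hk : ∀ θ, 0 < k θ ∧ |k θ * Real.cos θ| + |k θ * Real.sin θ| < Real.pi ∧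
      Real.cos (k θ * Real.cos θ) + Real.cos (k θ * Real.sin θ) = 2 - e)
    (θ0 : ℝ) : ∃ d, HasDerivAt k d θ0 := by
  obtain ⟨hk0, hk1, hk2⟩ := hk θ0
  set c0 := Real.cos θ0 with hc0
  set s0 := Real.sin θ0 with hs0
  set k0 := k θ0 with hk0def
  have hcs0 : c0 ≠ 0 ∨ s0 ≠ 0 := by
    by_contra h
    push_neg at h
    nlinarith [Real.sin_sq_add_cos_sq θ0, h.1, h.2]
  have hbpos : 0 < c0 * Real.sin (k0 * c0) + s0 * Real.sin (k0 * s0) :=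
    deriv_pos_aux hcs0 hk0 hk1
  set a := k0 * s0 * Real.sin (k0 * c0) - k0 * c0 * Real.sin (k0 * s0) with ha
  set b := -(c0 * Real.sin (k0 * c0) + s0 * Real.sin (k0 * s0)) with hbdef
  have hb : b ≠ 0 := by rw [hbdef]; exact neg_ne_zero.2 (ne_of_gt hbpos)
  set H : ℝ × ℝ → ℝ × ℝ :=
    fun p => (p.1, Real.cos (p.2 * Real.cos p.1) + Real.cos (p.2 * Real.sin p.1)) with hHdef
  set L := shearEquiv a b hb with hLdef
  have hg1 : HasStrictFDerivAt (fun p : ℝ × ℝ => p.2 * Real.cos p.1)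
      (k0 • (-Real.sin θ0 • ContinuousLinearMap.fst ℝ ℝ ℝ)
        + Real.cos θ0 • ContinuousLinearMap.snd ℝ ℝ ℝ) (θ0, k0) :=
    (hasStrictFDerivAt_snd (𝕜 := ℝ) (E := ℝ) (F := ℝ) (p := (θ0, k0))).mul
      (hasStrictFDerivAt_fst (𝕜 := ℝ) (E := ℝ) (F := ℝ) (p := (θ0, k0))).cos
  have hg2 : HasStrictFDerivAt (fun p : ℝ × ℝ => p.2 * Real.sin p.1)
      (k0 • (Real.cos θ0 • ContinuousLinearMap.fst ℝ ℝ ℝ)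
        + Real.sin θ0 • ContinuousLinearMap.snd ℝ ℝ ℝ) (θ0, k0) :=
    (hasStrictFDerivAt_snd (𝕜 := ℝ) (E := ℝ) (F := ℝ) (p := (θ0, k0))).mul
      (hasStrictFDerivAt_fst (𝕜 := ℝ) (E := ℝ) (F := ℝ) (p := (θ0, k0))).sin
  have hH' : HasStrictFDerivAt H
      ((ContinuousLinearMap.fst ℝ ℝ ℝ).prod
        (-Real.sin (k0 * c0) • (k0 • (-Real.sin θ0 • ContinuousLinearMap.fst ℝ ℝ ℝ)
            + Real.cos θ0 • ContinuousLinearMap.snd ℝ ℝ ℝ)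
          + -Real.sin (k0 * s0) • (k0 • (Real.cos θ0 • ContinuousLinearMap.fst ℝ ℝ ℝ)
            + Real.sin θ0 • ContinuousLinearMap.snd ℝ ℝ ℝ))) (θ0, k0) :=
    (hasStrictFDerivAt_fst (𝕜 := ℝ) (E := ℝ) (F := ℝ) (p := (θ0, k0))).prodMk
      (hg1.cos.add hg2.cos)
  have hLeq : ((ContinuousLinearMap.fst ℝ ℝ ℝ).prod
      (-Real.sin (k0 * c0) • (k0 • (-Real.sin θ0 • ContinuousLinearMap.fst ℝ ℝ ℝ)
          + Real.cos θ0 • ContinuousLinearMap.snd ℝ ℝ ℝ)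
        + -Real.sin (k0 * s0) • (k0 • (Real.cos θ0 • ContinuousLinearMap.fst ℝ ℝ ℝ)
          + Real.sin θ0 • ContinuousLinearMap.snd ℝ ℝ ℝ)))
      = (L : (ℝ × ℝ) →L[ℝ] (ℝ × ℝ)) := by
    refine ContinuousLinearMap.ext fun v => Prod.ext ?_ ?_
    · simp [hLdef]
    · simp [hLdef, ha, hbdef, hc0, hs0]
      ring
  rw [hLeq] at hH'
  have hHpt : H (θ0, k0) = (θ0, 2 - e) := by
    rw [hHdef]
    exact Prod.ext rfl hk2
  have hψpt : hH'.localInverse H _ _ (θ0, 2 - e) = (θ0, k0) := by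
    rw [← hHpt]; exact hH'.localInverse_apply_image
  have hright : ∀ᶠ y in nhds (θ0, 2 - e), H (hH'.localInverse H _ _ y) = y := by
    rw [← hHpt]; exact hH'.eventually_right_inverse
  have hψd : HasStrictFDerivAt (hH'.localInverse H _ _)
      ((L.symm : (ℝ × ℝ) →L[ℝ] (ℝ × ℝ))) (θ0, 2 - e) := by
    rw [← hHpt]; exact hH'.to_localInverse
  set ψ := hH'.localInverse H _ _ with hψdef
  set g : ℝ → ℝ := fun θ => (ψ (θ, 2 - e)).2 with hgdef
  have hj : HasDerivAt (fun θ : ℝ => ((θ, 2 - e) : ℝ × ℝ)) (1, 0) θ0 :=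
    (hasDerivAt_id θ0).prodMk (hasDerivAt_const θ0 (2 - e))
  have hψj : HasDerivAt (fun θ => ψ (θ, 2 - e))
      ((L.symm : (ℝ × ℝ) →L[ℝ] (ℝ × ℝ)) (1, 0)) θ0 :=
    hψd.hasFDerivAt.comp_hasDerivAt θ0 hj
  have hg : HasDerivAt g (((L.symm : (ℝ × ℝ) →L[ℝ] (ℝ × ℝ)) (1, 0)).2) θ0 :=
    (hasFDerivAt_snd (𝕜 := ℝ) (E := ℝ) (F := ℝ)).comp_hasDerivAt θ0 hψj
  have hgθ0 : g θ0 = k0 := by rw [hgdef]; simp only []; rw [hψpt]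
  have htend : Filter.Tendsto (fun θ : ℝ => ((θ, 2 - e) : ℝ × ℝ))
      (nhds θ0) (nhds (θ0, 2 - e)) := (continuous_id.prodMk continuous_const).tendsto θ0
  have hEv1 : ∀ᶠ θ in nhds θ0, H (ψ (θ, 2 - e)) = (θ, 2 - e) := htend.eventually hright
  have hgpos : ∀ᶠ θ in nhds θ0, 0 < g θ := by
    have : Filter.Tendsto g (nhds θ0) (nhds k0) := hgθ0 ▸ hg.continuousAt.tendsto
    exact this.eventually (eventually_gt_nhds hk0)
  have hglt : ∀ᶠ θ in nhds θ0, |g θ * Real.cos θ| + |g θ * Real.sin θ| < Real.pi := by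
    have hcont : ContinuousAt (fun θ => |g θ * Real.cos θ| + |g θ * Real.sin θ|) θ0 :=
      ((hg.continuousAt.mul Real.continuous_cos.continuousAt).abs.add
        (hg.continuousAt.mul Real.continuous_sin.continuousAt).abs)
    have hval : |g θ0 * Real.cos θ0| + |g θ0 * Real.sin θ0| < Real.pi := by
      rw [hgθ0]; exact hk1
    exact hcont.tendsto.eventually (eventually_lt_nhds hval)
  have hfeq : ∀ᶠ θ in nhds θ0,
      Real.cos (g θ * Real.cos θ) + Real.cos (g θ * Real.sin θ) = 2 - e := by
    filter_upwards [hEv1] with θ hθ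
    have h1 : (ψ (θ, 2 - e)).1 = θ := congrArg Prod.fst hθ
    have h2 : Real.cos ((ψ (θ, 2 - e)).2 * Real.cos ((ψ (θ, 2 - e)).1))
        + Real.cos ((ψ (θ, 2 - e)).2 * Real.sin ((ψ (θ, 2 - e)).1)) = 2 - e :=
      congrArg Prod.snd hθ
    rw [h1] at h2
    exact h2
  have hkg : k =ᶠ[nhds θ0] g := by
    filter_upwards [hgpos, hglt, hfeq] with θ hp hl hf
    obtain ⟨ha0, ha1, ha2⟩ := hk θ
    have hcs : Real.cos θ ≠ 0 ∨ Real.sin θ ≠ 0 := by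
      by_contra hcon
      push_neg at hcon
      nlinarith [Real.sin_sq_add_cos_sq θ, hcon.1, hcon.2]
    exact K_uniq_aux hcs ha0 ha1 hp hl (by rw [ha2, hf])
  exact ⟨_, hg.congr_of_eventuallyEq hkg⟩

/-- The phase `Φ(θ) = -K(e,θ) cos(φ - θ)` has a stationary point `θ_s ∈ [0, π/2]`:
the derivative of `θ ↦ K(e,θ) cos(φ - θ)` vanishes at `θ_s`. -/
theorem phase_stationary_point_exists
    (K : ℝ → ℝ → ℝ)
    (hK : ∀ e ∈ Set.Ioo (0 : ℝ) 2, ∀ θ : ℝ,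
      0 < K e θ ∧ |K e θ * Real.cos θ| + |K e θ * Real.sin θ| < Real.pi ∧
        Real.cos (K e θ * Real.cos θ) + Real.cos (K e θ * Real.sin θ) = 2 - e)
    (e : ℝ) (he : e ∈ Set.Ioo (0 : ℝ) 2) (φ : ℝ) (hφ : φ ∈ Set.Icc 0 (Real.pi / 2)) :
    ∃ θs ∈ Set.Icc 0 (Real.pi / 2),
      HasDerivAt (fun θ : ℝ => K e θ * Real.cos (φ - θ)) 0 θs := by
  obtain ⟨hφ0, hφ2⟩ := hφ
  have hπ : (0 : ℝ) < Real.pi := Real.pi_pos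
  have hk : ∀ θ, 0 < K e θ ∧ |K e θ * Real.cos θ| + |K e θ * Real.sin θ| < Real.pi ∧
      Real.cos (K e θ * Real.cos θ) + Real.cos (K e θ * Real.sin θ) = 2 - e := hK e he
  -- symmetry lemmas
  have hcsθ : ∀ θ : ℝ, Real.cos θ ≠ 0 ∨ Real.sin θ ≠ 0 := by
    intro θ
    by_contra hcon
    push_neg at hcon
    nlinarith [Real.sin_sq_add_cos_sq θ, hcon.1, hcon.2]
  have hsym_neg : ∀ θ : ℝ, K e (-θ) = K e θ := by
    intro θ
    obtain ⟨p1, p2, p3⟩ := hk (-θ)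
    obtain ⟨q1, q2, q3⟩ := hk θ
    rw [Real.cos_neg, Real.sin_neg, mul_neg, abs_neg] at p2
    rw [Real.cos_neg, Real.sin_neg, mul_neg, Real.cos_neg] at p3
    exact K_uniq_aux (hcsθ θ) p1 p2 q1 q2 (by rw [p3, q3])
  have hsym_pi : ∀ θ : ℝ, K e (Real.pi - θ) = K e θ := by
    intro θ
    obtain ⟨p1, p2, p3⟩ := hk (Real.pi - θ)
    obtain ⟨q1, q2, q3⟩ := hk θ
    rw [Real.cos_pi_sub, Real.sin_pi_sub, mul_neg, abs_neg] at p2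
    rw [Real.cos_pi_sub, Real.sin_pi_sub, mul_neg, Real.cos_neg] at p3
    exact K_uniq_aux (hcsθ θ) p1 p2 q1 q2 (by rw [p3, q3])
  -- differentiability of the phase
  set Φ : ℝ → ℝ := fun θ => K e θ * Real.cos (φ - θ) with hΦdef
  have hΦd : ∀ θ : ℝ, ∃ d, HasDerivAt Φ d θ := by
    intro θ
    obtain ⟨d, hd⟩ := k_hasDerivAt (K e) hk θ
    exact ⟨_, hd.mul ((hasDerivAt_id θ).const_sub φ).cos⟩
  have hΦcont : ContinuousOn Φ (Set.Icc (φ - Real.pi / 2) (φ + Real.pi / 2)) :=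
    fun θ _ => ((hΦd θ).choose_spec.differentiableAt.continuousAt).continuousWithinAt
  have hφI : φ ∈ Set.Icc (φ - Real.pi / 2) (φ + Real.pi / 2) := ⟨by linarith, by linarith⟩
  obtain ⟨θ0, hθ0I, hmax⟩ := isCompact_Icc.exists_isMaxOn ⟨φ, hφI⟩ hΦcont
  have hΦφ : Φ φ = K e φ := by rw [hΦdef]; simp
  have hpos : 0 < Φ θ0 := lt_of_lt_of_le (by rw [hΦφ]; exact (hk φ).1) (hmax hφI)
  have hend1 : Φ (φ - Real.pi / 2) = 0 := by
    have h1 : φ - (φ - Real.pi / 2) = Real.pi / 2 := by ring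
    rw [hΦdef]; simp only []; rw [h1, Real.cos_pi_div_two, mul_zero]
  have hend2 : Φ (φ + Real.pi / 2) = 0 := by
    have h1 : φ - (φ + Real.pi / 2) = -(Real.pi / 2) := by ring
    rw [hΦdef]; simp only []; rw [h1, Real.cos_neg, Real.cos_pi_div_two, mul_zero]
  have hθ0lt : φ - Real.pi / 2 < θ0 := by
    rcases lt_or_eq_of_le hθ0I.1 with h | h
    · exact h
    · rw [← h] at hpos; rw [hend1] at hpos; linarith
  have hθ0lt' : θ0 < φ + Real.pi / 2 := by
    rcases lt_or_eq_of_le hθ0I.2 with h | h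
    · exact h
    · rw [h] at hpos; rw [hend2] at hpos; linarith
  -- find stationary point in [0, π/2]
  obtain ⟨θs, hθsIcc, hθsIoo, hmax'⟩ :
      ∃ θs, θs ∈ Set.Icc 0 (Real.pi / 2) ∧
        θs ∈ Set.Ioo (φ - Real.pi / 2) (φ + Real.pi / 2) ∧
        IsMaxOn Φ (Set.Icc (φ - Real.pi / 2) (φ + Real.pi / 2)) θs := by
    rcases le_or_gt 0 θ0 with h0 | h0
    · rcases le_or_gt θ0 (Real.pi / 2) with h2 | h2
      · exact ⟨θ0, ⟨h0, h2⟩, ⟨hθ0lt, hθ0lt'⟩, hmax⟩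
      · -- θ0 > π/2 : reflect about π/2
        have hkey : Φ θ0 ≤ Φ (Real.pi - θ0) := by
          have harg : φ - (Real.pi - θ0) = φ - Real.pi + θ0 := by ring
          have hval : Φ (Real.pi - θ0) = K e θ0 * Real.cos (φ - Real.pi + θ0) := by
            rw [hΦdef]; simp only []; rw [hsym_pi, harg]
          have hd := Real.cos_sub_cos (φ - Real.pi + θ0) (φ - θ0)
          have e1 : (φ - Real.pi + θ0 + (φ - θ0)) / 2 = φ - Real.pi / 2 := by ring
          have e2 : (φ - Real.pi + θ0 - (φ - θ0)) / 2 = θ0 - Real.pi / 2 := by ring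
          rw [e1, e2] at hd
          have e3 : Real.sin (φ - Real.pi / 2) = -Real.cos φ := by
            have : φ - Real.pi / 2 = -(Real.pi / 2 - φ) := by ring
            rw [this, Real.sin_neg, Real.sin_pi_div_two_sub]
          rw [e3] at hd
          have hcosφ : 0 ≤ Real.cos φ := Real.cos_nonneg_of_mem_Icc ⟨by linarith, hφ2⟩
          have hsinθ : 0 ≤ Real.sin (θ0 - Real.pi / 2) :=
            Real.sin_nonneg_of_nonneg_of_le_pi (by linarith) (by linarith)
          have hineq : Real.cos (φ - θ0) ≤ Real.cos (φ - Real.pi + θ0) := by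
            nlinarith [mul_nonneg hcosφ hsinθ]
          rw [hval, hΦdef]
          exact mul_le_mul_of_nonneg_left hineq (hk θ0).1.le
        refine ⟨Real.pi - θ0, ⟨by linarith, by linarith⟩, ⟨by linarith, by linarith⟩, ?_⟩
        intro x hx
        exact le_trans (hmax hx) hkey
    · -- θ0 < 0 : reflect about 0
      have hkey : Φ θ0 ≤ Φ (-θ0) := by
        have harg : φ - -θ0 = φ + θ0 := by ring
        have hval : Φ (-θ0) = K e θ0 * Real.cos (φ + θ0) := by
          rw [hΦdef]; simp only []; rw [hsym_neg, harg]
        have hd := Real.cos_sub_cos (φ + θ0) (φ - θ0)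
        have e1 : (φ + θ0 + (φ - θ0)) / 2 = φ := by ring
        have e2 : (φ + θ0 - (φ - θ0)) / 2 = θ0 := by ring
        rw [e1, e2] at hd
        have hsinφ : 0 ≤ Real.sin φ :=
          Real.sin_nonneg_of_nonneg_of_le_pi hφ0 (by linarith)
        have hsinθ : 0 ≤ -Real.sin θ0 := by
          have h1 : 0 ≤ Real.sin (-θ0) :=
            Real.sin_nonneg_of_nonneg_of_le_pi (by linarith) (by linarith)
          rw [Real.sin_neg] at h1
          linarith
        have hineq : Real.cos (φ - θ0) ≤ Real.cos (φ + θ0) := by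
          nlinarith [mul_nonneg hsinφ hsinθ]
        rw [hval, hΦdef]
        exact mul_le_mul_of_nonneg_left hineq (hk θ0).1.le
      refine ⟨-θ0, ⟨by linarith, by linarith⟩, ⟨by linarith, by linarith⟩, ?_⟩
      intro x hx
      exact le_trans (hmax hx) hkey
  have hloc : IsLocalMax Φ θs :=
    hmax'.isLocalMax (Icc_mem_nhds hθsIoo.1 hθsIoo.2)
  obtain ⟨d, hd⟩ := hΦd θs
  have h0 : d = 0 := hloc.hasDerivAt_eq_zero hd
  exact ⟨θs, hθsIcc, h0 ▸ hd⟩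
end

section
/- Fix e ∈ (0,2) and φ ∈ [0, π/2]. The function (e,θ) ↦ K(e,θ) is continuously differentiable, and if θ_s ∈ [0, π/2] is a stationary point of θ ↦ K(e,θ) cos(φ - θ) (i.e. the θ-derivative vanishes at θ_s), then, writing K_s = K(e, θ_s), the second derivative of the phase Φ(θ) = -K(e,θ) cos(φ - θ) at θ_s equals (K(e,θ_s) ∂_e K(e,θ_s))² ψ(e,φ), where ψ(e,φ) = cos(K_s cos θ_s) sin(K_s sin θ_s) sin φ + cos(K_s sin θ_s) sin(K_s cos θ_s) cos φ, and moreover ψ(e,φ) > 0. -/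
open Real Topology Filter

set_option maxHeartbeats 1000000
open Real Topology Filter

lemma term_nonneg (x k : ℝ) (hk : 0 < k) (hm : k * |x| < π) : 0 ≤ x * Real.sin (k * x) := by
  rcases le_total 0 x with hx | hx
  · have h1 : 0 ≤ k * x := by positivity
    have h2 : k * x ≤ π := by rw [abs_of_nonneg hx] at hm; linarith
    exact mul_nonneg hx (Real.sin_nonneg_of_nonneg_of_le_pi h1 h2)
  · have h1 : 0 ≤ k * (-x) := by nlinarith
    have h2 : k * (-x) ≤ π := by rw [abs_of_nonpos hx] at hm; linarith
    have hs : Real.sin (k * x) ≤ 0 := by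
      have : Real.sin (k * x) = - Real.sin (k * (-x)) := by rw [← Real.sin_neg]; ring_nf
      linarith [this, Real.sin_nonneg_of_nonneg_of_le_pi h1 h2]
    exact mul_nonneg_of_nonpos_of_nonpos hx hs

lemma term_pos (x k : ℝ) (hk : 0 < k) (hx : x ≠ 0) (hm : k * |x| < π) :
    0 < x * Real.sin (k * x) := by
  rcases lt_or_gt_of_ne hx with hx' | hx'
  · have h1 : 0 < k * (-x) := by nlinarith
    have h2 : k * (-x) < π := by rw [abs_of_neg hx'] at hm; linarith
    have hp := Real.sin_pos_of_pos_of_lt_pi h1 h2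
    have hs : Real.sin (k * x) < 0 := by
      have : Real.sin (k * x) = - Real.sin (k * (-x)) := by rw [← Real.sin_neg]; ring_nf
      linarith
    exact mul_pos_of_neg_of_neg hx' hs
  · have h1 : 0 < k * x := by positivity
    have h2 : k * x < π := by rw [abs_of_pos hx'] at hm; linarith
    exact mul_pos hx' (Real.sin_pos_of_pos_of_lt_pi h1 h2)

lemma Dpos (θ k : ℝ) (hk : 0 < k) (hm : k * (|Real.cos θ| + |Real.sin θ|) < π) :
    0 < Real.cos θ * Real.sin (k * Real.cos θ) + Real.sin θ * Real.sin (k * Real.sin θ) := by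
  have hmc : k * |Real.cos θ| < π := by nlinarith [abs_nonneg (Real.sin θ)]
  have hms : k * |Real.sin θ| < π := by nlinarith [abs_nonneg (Real.cos θ)]
  have h1 := term_nonneg (Real.cos θ) k hk hmc
  have h2 := term_nonneg (Real.sin θ) k hk hms
  rcases eq_or_ne (Real.cos θ) 0 with hc | hc
  · have hs : Real.sin θ ≠ 0 := by
      intro h; have := Real.sin_sq_add_cos_sq θ; rw [h, hc] at this; norm_num at this
    have := term_pos (Real.sin θ) k hk hs hms
    nlinarith
  · have := term_pos (Real.cos θ) k hk hc hmc
    nlinarith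

lemma uniqK (θ K₁ K₂ : ℝ) (h₁ : 0 < K₁) (h₂ : 0 < K₂)
    (m₁ : |K₁ * Real.cos θ| + |K₁ * Real.sin θ| < π)
    (m₂ : |K₂ * Real.cos θ| + |K₂ * Real.sin θ| < π)
    (heq : Real.cos (K₁ * Real.cos θ) + Real.cos (K₁ * Real.sin θ)
         = Real.cos (K₂ * Real.cos θ) + Real.cos (K₂ * Real.sin θ)) : K₁ = K₂ := by
  set c := Real.cos θ with hc
  set s := Real.sin θ with hs
  set M := |c| + |s| with hM
  have hM1 : 1 ≤ M := by
    have h := Real.sin_sq_add_cos_sq θ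
    nlinarith [abs_nonneg c, abs_nonneg s, sq_abs c, sq_abs s,
      mul_nonneg (abs_nonneg c) (abs_nonneg s)]
  have hMpos : 0 < M := by linarith
  set R := π / M with hR
  have habs : ∀ K : ℝ, 0 < K → |K * c| + |K * s| = K * M := by
    intro K hK
    rw [abs_mul, abs_mul, abs_of_pos hK, hM]; ring
  have hmem : ∀ K : ℝ, 0 < K → |K * c| + |K * s| < π → K ∈ Set.Ico (0:ℝ) R := by
    intro K hK hm
    rw [habs K hK] at hm
    exact ⟨le_of_lt hK, by rw [hR, lt_div_iff₀ hMpos]; linarith⟩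
  have hanti : StrictAntiOn (fun K => Real.cos (K * c) + Real.cos (K * s)) (Set.Ico (0:ℝ) R) := by
    apply strictAntiOn_of_deriv_neg (convex_Ico 0 R)
    · fun_prop
    · intro K hK
      rw [interior_Ico] at hK
      have hd : HasDerivAt (fun K => Real.cos (K * c) + Real.cos (K * s))
          (-Real.sin (K * c) * c + -Real.sin (K * s) * s) K := by
        exact ((((hasDerivAt_id K).mul_const c).cos).add (((hasDerivAt_id K).mul_const s).cos)).congr_deriv (by simp)
      rw [hd.deriv]
      have hKM : K * M < π := by
        have := hK.2; rw [hR, lt_div_iff₀ hMpos] at this; linarith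
      have := Dpos θ K hK.1 (by rw [← hc, ← hs, ← hM]; exact hKM)
      rw [← hc, ← hs] at this
      nlinarith
  exact hanti.injOn (hmem K₁ h₁ m₁) (hmem K₂ h₂ m₂) heq

lemma abs_eq_mul (k c s : ℝ) (hk : 0 < k) : |k * c| + |k * s| = k * (|c| + |s|) := by
  rw [abs_mul, abs_mul, abs_of_pos hk]; ring

lemma KcontDiffAt (K : ℝ → ℝ → ℝ)
    (hK : ∀ e ∈ Set.Ioo (0 : ℝ) 2, ∀ θ : ℝ,
      0 < K e θ ∧ |K e θ * Real.cos θ| + |K e θ * Real.sin θ| < Real.pi ∧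
        Real.cos (K e θ * Real.cos θ) + Real.cos (K e θ * Real.sin θ) = 2 - e)
    (e₀ : ℝ) (he₀ : e₀ ∈ Set.Ioo (0:ℝ) 2) (θ₀ : ℝ) :
    ContDiffAt ℝ 2 (fun p : ℝ × ℝ => K p.1 p.2) (e₀, θ₀) := by
  obtain ⟨hk0, hm0, heq0⟩ := hK e₀ he₀ θ₀
  set k₀ := K e₀ θ₀ with hk₀def
  set G : ℝ × ℝ → ℝ × ℝ :=
    fun q => (2 - Real.cos (q.2 * Real.cos q.1) - Real.cos (q.2 * Real.sin q.1), q.1) with hGdef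
  have hGsmooth : ContDiffAt ℝ 2 G (θ₀, k₀) := by
    apply ContDiffAt.prodMk _ contDiffAt_fst
    apply ContDiffAt.sub
    apply ContDiffAt.sub contDiffAt_const
    · exact (Real.contDiff_cos.contDiffAt).comp _
        (contDiffAt_snd.mul ((Real.contDiff_cos.contDiffAt).comp _ contDiffAt_fst))
    · exact (Real.contDiff_cos.contDiffAt).comp _
        (contDiffAt_snd.mul ((Real.contDiff_sin.contDiffAt).comp _ contDiffAt_fst))
  set d : ℝ := Real.cos θ₀ * Real.sin (k₀ * Real.cos θ₀) + Real.sin θ₀ * Real.sin (k₀ * Real.sin θ₀)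
    with hddef
  have hd : 0 < d := Dpos θ₀ k₀ hk0 (by rw [← abs_eq_mul _ _ _ hk0]; exact hm0)
  set p : ℝ := k₀ * Real.cos θ₀ * Real.sin (k₀ * Real.sin θ₀)
      - k₀ * Real.sin θ₀ * Real.sin (k₀ * Real.cos θ₀) with hpdef
  set L : ℝ × ℝ →L[ℝ] ℝ × ℝ :=
    (p • ContinuousLinearMap.fst ℝ ℝ ℝ + d • ContinuousLinearMap.snd ℝ ℝ ℝ).prod
      (ContinuousLinearMap.fst ℝ ℝ ℝ) with hLdef
  set Linv : ℝ × ℝ →L[ℝ] ℝ × ℝ :=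
    (ContinuousLinearMap.snd ℝ ℝ ℝ).prod
      (d⁻¹ • (ContinuousLinearMap.fst ℝ ℝ ℝ - p • ContinuousLinearMap.snd ℝ ℝ ℝ)) with hLinvdef
  have hLeft : Function.LeftInverse Linv L := by
    intro x
    simp [hLdef, hLinvdef, ContinuousLinearMap.prod_apply,
      inv_mul_cancel_left₀ (ne_of_gt hd)]
  have hRight : Function.RightInverse Linv L := by
    intro x
    have hdne : d ≠ 0 := ne_of_gt hd
    simp [hLdef, hLinvdef, ContinuousLinearMap.prod_apply, mul_sub,
      mul_inv_cancel_left₀ hdne]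
  set E : (ℝ × ℝ) ≃L[ℝ] (ℝ × ℝ) := ContinuousLinearEquiv.equivOfInverse L Linv hLeft hRight
    with hEdef
  have hEL : (E : (ℝ × ℝ) →L[ℝ] (ℝ × ℝ)) = L := rfl
  -- the derivative of G at (θ₀, k₀)
  have hfdL : HasFDerivAt G L (θ₀, k₀) := by
    have hcos1 : HasFDerivAt (fun q : ℝ × ℝ => Real.cos q.1)
        ((-Real.sin θ₀) • ContinuousLinearMap.fst ℝ ℝ ℝ) (θ₀, k₀) :=
      by
        have h := (Real.hasDerivAt_cos θ₀).comp_hasFDerivAt (f := Prod.fst) ((θ₀, k₀) : ℝ × ℝ) (hasFDerivAt_fst (𝕜 := ℝ))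
        exact h
    have hsin1 : HasFDerivAt (fun q : ℝ × ℝ => Real.sin q.1)
        ((Real.cos θ₀) • ContinuousLinearMap.fst ℝ ℝ ℝ) (θ₀, k₀) :=
      by
        have h := (Real.hasDerivAt_sin θ₀).comp_hasFDerivAt (f := Prod.fst) ((θ₀, k₀) : ℝ × ℝ) (hasFDerivAt_fst (𝕜 := ℝ))
        exact h
    have hmul1 : HasFDerivAt (fun q : ℝ × ℝ => q.2 * Real.cos q.1)
        (k₀ • ((-Real.sin θ₀) • ContinuousLinearMap.fst ℝ ℝ ℝ)
          + (Real.cos θ₀) • ContinuousLinearMap.snd ℝ ℝ ℝ) (θ₀, k₀) :=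
      (hasFDerivAt_snd).mul hcos1
    have hmul2 : HasFDerivAt (fun q : ℝ × ℝ => q.2 * Real.sin q.1)
        (k₀ • ((Real.cos θ₀) • ContinuousLinearMap.fst ℝ ℝ ℝ)
          + (Real.sin θ₀) • ContinuousLinearMap.snd ℝ ℝ ℝ) (θ₀, k₀) :=
      (hasFDerivAt_snd).mul hsin1
    have hc1 : HasFDerivAt (fun q : ℝ × ℝ => Real.cos (q.2 * Real.cos q.1))
        ((-Real.sin (k₀ * Real.cos θ₀)) • (k₀ • ((-Real.sin θ₀) • ContinuousLinearMap.fst ℝ ℝ ℝ)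
          + (Real.cos θ₀) • ContinuousLinearMap.snd ℝ ℝ ℝ)) (θ₀, k₀) :=
      by
        have h := (Real.hasDerivAt_cos (k₀ * Real.cos θ₀)).comp_hasFDerivAt ((θ₀, k₀) : ℝ × ℝ) hmul1
        exact h
    have hc2 : HasFDerivAt (fun q : ℝ × ℝ => Real.cos (q.2 * Real.sin q.1))
        ((-Real.sin (k₀ * Real.sin θ₀)) • (k₀ • ((Real.cos θ₀) • ContinuousLinearMap.fst ℝ ℝ ℝ)
          + (Real.sin θ₀) • ContinuousLinearMap.snd ℝ ℝ ℝ)) (θ₀, k₀) :=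
      by
        have h := (Real.hasDerivAt_cos (k₀ * Real.sin θ₀)).comp_hasFDerivAt ((θ₀, k₀) : ℝ × ℝ) hmul2
        exact h
    have hG1 : HasFDerivAt (fun q : ℝ × ℝ =>
        2 - Real.cos (q.2 * Real.cos q.1) - Real.cos (q.2 * Real.sin q.1))
        (0 - ((-Real.sin (k₀ * Real.cos θ₀)) • (k₀ • ((-Real.sin θ₀) • ContinuousLinearMap.fst ℝ ℝ ℝ)
          + (Real.cos θ₀) • ContinuousLinearMap.snd ℝ ℝ ℝ))
         - ((-Real.sin (k₀ * Real.sin θ₀)) • (k₀ • ((Real.cos θ₀) • ContinuousLinearMap.fst ℝ ℝ ℝ)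
          + (Real.sin θ₀) • ContinuousLinearMap.snd ℝ ℝ ℝ))) (θ₀, k₀) :=
      ((hasFDerivAt_const (2:ℝ) _).sub hc1).sub hc2
    have hbig := HasFDerivAt.prodMk hG1 (hasFDerivAt_fst (𝕜 := ℝ) (p := ((θ₀, k₀) : ℝ × ℝ)))
    have hLeq : (0 - ((-Real.sin (k₀ * Real.cos θ₀)) • (k₀ • ((-Real.sin θ₀) • ContinuousLinearMap.fst ℝ ℝ ℝ)
          + (Real.cos θ₀) • ContinuousLinearMap.snd ℝ ℝ ℝ))
         - ((-Real.sin (k₀ * Real.sin θ₀)) • (k₀ • ((Real.cos θ₀) • ContinuousLinearMap.fst ℝ ℝ ℝ)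
          + (Real.sin θ₀) • ContinuousLinearMap.snd ℝ ℝ ℝ))).prod (ContinuousLinearMap.fst ℝ ℝ ℝ) = L := by
      apply ContinuousLinearMap.ext
      intro v
      apply Prod.ext
      · simp [hLdef, hpdef, hddef, ContinuousLinearMap.prod_apply]
        ring
      · simp [hLdef, ContinuousLinearMap.prod_apply]
    rw [hLeq] at hbig
    exact hbig
  have hn : (2 : WithTop ℕ∞) ≠ 0 := by norm_num
  have hEfd : HasFDerivAt G ((E : (ℝ × ℝ) →L[ℝ] (ℝ × ℝ))) (θ₀, k₀) := by
    rw [hEL]; exact hfdL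
  have hs : HasStrictFDerivAt G ((E : (ℝ × ℝ) →L[ℝ] (ℝ × ℝ))) (θ₀, k₀) :=
    hGsmooth.hasStrictFDerivAt' hEfd hn
  set N : ℝ × ℝ → ℝ × ℝ := hs.localInverse G E (θ₀, k₀) with hNdef
  have hGval : G (θ₀, k₀) = (e₀, θ₀) := by
    simp only [hGdef]
    have : 2 - Real.cos (k₀ * Real.cos θ₀) - Real.cos (k₀ * Real.sin θ₀) = e₀ := by linarith
    rw [this]
  have hNsmooth : ContDiffAt ℝ 2 N (e₀, θ₀) := by
    have h := hGsmooth.to_localInverse (f' := E) (hf' := hEfd) (hn := hn)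
    rw [hGval] at h
    exact h
  have hrinv : ∀ᶠ y in 𝓝 (e₀, θ₀), G (N y) = y := by
    have h := hs.eventually_right_inverse
    rw [← hNdef, hGval] at h
    exact h
  have hT : Filter.Tendsto N (𝓝 (e₀, θ₀)) (𝓝 (θ₀, k₀)) := by
    have h1 : N (e₀, θ₀) = (θ₀, k₀) := by
      have h := hs.localInverse_apply_image
      rw [← hNdef, hGval] at h
      exact h
    have h := hs.localInverse_continuousAt
    rw [← hNdef, hGval] at h
    unfold ContinuousAt at h
    rwa [h1] at h
  have hev1 : ∀ᶠ y in 𝓝 (e₀, θ₀), 0 < (N y).2 := by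
    have h2 : Filter.Tendsto (fun y => (N y).2) (𝓝 (e₀, θ₀)) (𝓝 k₀) :=
      (continuous_snd.tendsto _).comp hT
    exact h2.eventually (eventually_gt_nhds hk0)
  have hev2 : ∀ᶠ y in 𝓝 (e₀, θ₀),
      |(N y).2 * Real.cos (N y).1| + |(N y).2 * Real.sin (N y).1| < π := by
    have hF2 : Continuous (fun q : ℝ × ℝ => |q.2 * Real.cos q.1| + |q.2 * Real.sin q.1|) := by
      fun_prop
    have h2 : Filter.Tendsto (fun y => |(N y).2 * Real.cos (N y).1| + |(N y).2 * Real.sin (N y).1|)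
        (𝓝 (e₀, θ₀)) (𝓝 (|k₀ * Real.cos θ₀| + |k₀ * Real.sin θ₀|)) :=
      (hF2.tendsto _).comp hT
    exact h2.eventually (eventually_lt_nhds hm0)
  have hev3 : ∀ᶠ y : ℝ × ℝ in 𝓝 (e₀, θ₀), y.1 ∈ Set.Ioo (0:ℝ) 2 := by
    have : ∀ᶠ y : ℝ × ℝ in 𝓝 (e₀, θ₀), y ∈ (Set.Ioo (0:ℝ) 2) ×ˢ (Set.univ : Set ℝ) :=
      (isOpen_Ioo.prod isOpen_univ).eventually_mem (Set.mem_prod.mpr ⟨he₀, trivial⟩)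
    exact this.mono fun y hy => hy.1
  have hEq : (fun p : ℝ × ℝ => K p.1 p.2) =ᶠ[𝓝 (e₀, θ₀)] fun p => (N p).2 := by
    filter_upwards [hrinv, hev1, hev2, hev3] with y h1 h2 h3 h4
    have hth : (N y).1 = y.2 := congrArg Prod.snd h1
    have hfst : 2 - Real.cos ((N y).2 * Real.cos (N y).1)
        - Real.cos ((N y).2 * Real.sin (N y).1) = y.1 := congrArg Prod.fst h1
    rw [hth] at hfst h3
    have heqn : Real.cos ((N y).2 * Real.cos y.2) + Real.cos ((N y).2 * Real.sin y.2)
        = 2 - y.1 := by linarith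
    obtain ⟨hky, hmy, heqy⟩ := hK y.1 h4 y.2
    exact uniqK y.2 (K y.1 y.2) ((N y).2) hky h2 hmy h3 (heqy.trans heqn.symm)
  exact (ContDiffAt.comp _ contDiffAt_snd hNsmooth).congr_of_eventuallyEq hEq


private lemma psi_pos (k a b e sp cp : ℝ) (hk : 0 < k) (ha0 : 0 ≤ a) (hb0 : 0 ≤ b)
    (hPyt1 : a ^ 2 + b ^ 2 = 1) (hmabs : k * a + k * b < Real.pi)
    (hsum : Real.cos (k * a) + Real.cos (k * b) = 2 - e) (he1 : 0 < e) (he2 : e < 2)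
    (hS2 : Real.sin (k * a) * sp = Real.sin (k * b) * cp)
    (hsp0 : 0 ≤ sp) (hcp0 : 0 ≤ cp) (hPyt2 : sp ^ 2 + cp ^ 2 = 1) :
    0 < Real.cos (k * a) * Real.sin (k * b) * sp + Real.cos (k * b) * Real.sin (k * a) * cp := by
  set sa : ℝ := Real.sin (k * a) with hsadef
  set ca : ℝ := Real.cos (k * a) with hcadef
  set sb : ℝ := Real.sin (k * b) with hsbdef
  set cb : ℝ := Real.cos (k * b) with hcbdef
  have pyA : sa ^ 2 + ca ^ 2 = 1 := by
    rw [hsadef, hcadef]; nlinarith [Real.sin_sq_add_cos_sq (k * a)]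
  have pyB : sb ^ 2 + cb ^ 2 = 1 := by
    rw [hsbdef, hcbdef]; nlinarith [Real.sin_sq_add_cos_sq (k * b)]
  have hka : k * a ≤ k * a + k * b := by nlinarith
  have hsa0 : 0 ≤ sa := by
    rw [hsadef]
    exact Real.sin_nonneg_of_nonneg_of_le_pi (by positivity) (by nlinarith)
  have hsb0 : 0 ≤ sb := by
    rw [hsbdef]
    exact Real.sin_nonneg_of_nonneg_of_le_pi (by positivity) (by nlinarith)
  have hab1 : 1 ≤ a + b := by nlinarith
  have hABpos : 0 < k * a + k * b := by nlinarith
  have hsAB := Real.sin_pos_of_pos_of_lt_pi hABpos hmabs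
  rw [Real.sin_add] at hsAB
  rw [← hsadef, ← hcadef, ← hsbdef, ← hcbdef] at hsAB
  have hca1 : ca ≤ 1 := by rw [hcadef]; exact Real.cos_le_one _
  have hcb1 : cb ≤ 1 := by rw [hcbdef]; exact Real.cos_le_one _
  have hsasb : 0 < sa + sb := by nlinarith
  have hone : 0 < 1 - ca * cb := by nlinarith [sq_nonneg (ca - cb)]
  have hψsum : (sa + sb) * (ca * sb * sp + cb * sa * cp)
      = (cp + sp) * ((ca + cb) * (1 - ca * cb)) := by
    linear_combination (ca * sb - cb * sa) * hS2 + (cp + sp) * ca * pyB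
      + (cp + sp) * cb * pyA
  have hspcp : 0 < sp + cp := by nlinarith
  have hP : 0 < (cp + sp) * ((ca + cb) * (1 - ca * cb)) := by
    apply mul_pos (by linarith)
    apply mul_pos (by linarith) hone
  nlinarith [hψsum, hP, hsasb]


private lemma hasDerivAt_of_eq {f : ℝ → ℝ} {a b x : ℝ} (h : HasDerivAt f a x) (hab : a = b) :
    HasDerivAt f b x := hab ▸ h

/-- `K` is continuously differentiable on `(0,2) × ℝ`, and at a stationary point
`θ_s` of `θ ↦ K(e,θ) cos(φ - θ)` the second derivative of the phase
`Φ(θ) = -K(e,θ) cos(φ - θ)` equals `(K ∂_e K)² ψ(e,φ)` with `ψ(e,φ) > 0`. -/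
theorem phase_second_derivative
    (K : ℝ → ℝ → ℝ)
    (hK : ∀ e ∈ Set.Ioo (0 : ℝ) 2, ∀ θ : ℝ,
      0 < K e θ ∧ |K e θ * Real.cos θ| + |K e θ * Real.sin θ| < Real.pi ∧
        Real.cos (K e θ * Real.cos θ) + Real.cos (K e θ * Real.sin θ) = 2 - e)
    (e : ℝ) (he : e ∈ Set.Ioo (0 : ℝ) 2) (φ : ℝ) (hφ : φ ∈ Set.Icc 0 (Real.pi / 2)) :
    ContDiffOn ℝ 1 (fun p : ℝ × ℝ => K p.1 p.2) (Set.Ioo (0 : ℝ) 2 ×ˢ Set.univ) ∧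
    ∀ θs ∈ Set.Icc 0 (Real.pi / 2),
      deriv (fun θ : ℝ => K e θ * Real.cos (φ - θ)) θs = 0 →
      (iteratedDeriv 2 (fun θ : ℝ => -(K e θ * Real.cos (φ - θ))) θs =
          (K e θs * deriv (fun e' : ℝ => K e' θs) e) ^ 2 *
            (Real.cos (K e θs * Real.cos θs) * Real.sin (K e θs * Real.sin θs) * Real.sin φ +
              Real.cos (K e θs * Real.sin θs) * Real.sin (K e θs * Real.cos θs) * Real.cos φ) ∧
        0 < Real.cos (K e θs * Real.cos θs) * Real.sin (K e θs * Real.sin θs) * Real.sin φ +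
              Real.cos (K e θs * Real.sin θs) * Real.sin (K e θs * Real.cos θs) * Real.cos φ) := by
  constructor
  · intro p hp
    exact ((KcontDiffAt K hK p.1 hp.1 p.2).of_le (by norm_num)).contDiffWithinAt
  intro θs hθs hstat
  obtain ⟨hk0, hm0, heq0⟩ := hK e he θs
  -- differentiability facts in the θ direction
  have hCDu : ∀ θ : ℝ, ContDiffAt ℝ 2 (fun t : ℝ => K e t) θ := by
    intro θ
    exact (KcontDiffAt K hK e he θ).comp θ (contDiffAt_const.prodMk contDiffAt_id)
  have hud : ∀ θ : ℝ, DifferentiableAt ℝ (fun t : ℝ => K e t) θ := fun θ =>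
    (hCDu θ).differentiableAt (by norm_num)
  have hu'd : DifferentiableAt ℝ (deriv (fun t : ℝ => K e t)) θs := by
    obtain ⟨s, hs_mem, hs_cd⟩ := (hCDu θs).contDiffOn (le_refl 2) (by simp)
    obtain ⟨t, hts, ht_open, hθt⟩ := mem_nhds_iff.mp hs_mem
    have hcd1 : ContDiffOn ℝ 1 (deriv (fun t : ℝ => K e t)) t :=
      (hs_cd.mono hts).deriv_of_isOpen ht_open (by norm_num)
    exact ((hcd1.differentiableOn one_ne_zero).differentiableAt (ht_open.mem_nhds hθt))
  have hvd : DifferentiableAt ℝ (fun e' : ℝ => K e' θs) e :=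
    ((KcontDiffAt K hK e he θs).comp e (contDiffAt_id.prodMk contDiffAt_const)).differentiableAt
      (by norm_num)
  -- abbreviations (purely in terms of atoms)
  set a : ℝ := Real.cos θs with hadef
  set b : ℝ := Real.sin θs with hbdef
  set k : ℝ := K e θs with hkdef
  set k1 : ℝ := deriv (fun t : ℝ => K e t) θs with hk1def
  set k2 : ℝ := deriv (deriv (fun t : ℝ => K e t)) θs with hk2def
  set v' : ℝ := deriv (fun e' : ℝ => K e' θs) e with hv'def
  set sa : ℝ := Real.sin (k * a) with hsadef
  set ca : ℝ := Real.cos (k * a) with hcadef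
  set sb : ℝ := Real.sin (k * b) with hsbdef
  set cb : ℝ := Real.cos (k * b) with hcbdef
  set sp : ℝ := Real.sin φ with hspdef
  set cp : ℝ := Real.cos φ with hcpdef
  have Pyt1 : a ^ 2 + b ^ 2 = 1 := by
    rw [hadef, hbdef]; nlinarith [Real.sin_sq_add_cos_sq θs]
  have Pyt2 : sp ^ 2 + cp ^ 2 = 1 := by
    rw [hspdef, hcpdef]; nlinarith [Real.sin_sq_add_cos_sq φ]
  have pyA : sa ^ 2 + ca ^ 2 = 1 := by
    rw [hsadef, hcadef]; nlinarith [Real.sin_sq_add_cos_sq (k * a)]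
  have pyB : sb ^ 2 + cb ^ 2 = 1 := by
    rw [hsbdef, hcbdef]; nlinarith [Real.sin_sq_add_cos_sq (k * b)]
  -- first derivative of the constraint in θ
  have hR1 : ∀ θ : ℝ, Real.sin (K e θ * Real.cos θ) *
        (deriv (fun t : ℝ => K e t) θ * Real.cos θ - K e θ * Real.sin θ)
      + Real.sin (K e θ * Real.sin θ) *
        (deriv (fun t : ℝ => K e t) θ * Real.sin θ + K e θ * Real.cos θ) = 0 := by
    intro θ
    have hA : HasDerivAt (fun t : ℝ => K e t * Real.cos t)
        (deriv (fun t : ℝ => K e t) θ * Real.cos θ - K e θ * Real.sin θ) θ :=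
      hasDerivAt_of_eq ((hud θ).hasDerivAt.mul (Real.hasDerivAt_cos θ)) (by ring)
    have hB : HasDerivAt (fun t : ℝ => K e t * Real.sin t)
        (deriv (fun t : ℝ => K e t) θ * Real.sin θ + K e θ * Real.cos θ) θ :=
      hasDerivAt_of_eq ((hud θ).hasDerivAt.mul (Real.hasDerivAt_sin θ)) (by ring)
    have h : HasDerivAt (fun t : ℝ => Real.cos (K e t * Real.cos t) + Real.cos (K e t * Real.sin t))
        (-Real.sin (K e θ * Real.cos θ) *
          (deriv (fun t : ℝ => K e t) θ * Real.cos θ - K e θ * Real.sin θ)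
         + -Real.sin (K e θ * Real.sin θ) *
          (deriv (fun t : ℝ => K e t) θ * Real.sin θ + K e θ * Real.cos θ)) θ :=
      hA.cos.add hB.cos
    have hconst : (fun t : ℝ => Real.cos (K e t * Real.cos t) + Real.cos (K e t * Real.sin t))
        = fun _ : ℝ => 2 - e := funext fun t => (hK e he t).2.2
    rw [hconst] at h
    have h0 := h.unique (hasDerivAt_const θ (2 - e))
    linarith
  -- second derivative of the constraint in θ, at θs
  have hR2 : ca * (k1 * a - k * b) ^ 2 + sa * (k2 * a - 2 * k1 * b - k * a)
      + cb * (k1 * b + k * a) ^ 2 + sb * (k2 * b + 2 * k1 * a - k * b) = 0 := by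
    have hA : HasDerivAt (fun t : ℝ => K e t * Real.cos t) (k1 * a - k * b) θs :=
      hasDerivAt_of_eq ((hud θs).hasDerivAt.mul (Real.hasDerivAt_cos θs)) (by
        rw [hk1def, hkdef, hadef, hbdef] <;> ring)
    have hB : HasDerivAt (fun t : ℝ => K e t * Real.sin t) (k1 * b + k * a) θs :=
      hasDerivAt_of_eq ((hud θs).hasDerivAt.mul (Real.hasDerivAt_sin θs)) (by
        rw [hk1def, hkdef, hadef, hbdef] <;> ring)
    have hA2 : HasDerivAt (fun t : ℝ =>
        deriv (fun t : ℝ => K e t) t * Real.cos t - K e t * Real.sin t)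
        (k2 * a - 2 * k1 * b - k * a) θs :=
      hasDerivAt_of_eq ((hu'd.hasDerivAt.mul (Real.hasDerivAt_cos θs)).sub
        ((hud θs).hasDerivAt.mul (Real.hasDerivAt_sin θs))) (by
        rw [hk2def, hk1def, hkdef, hadef, hbdef] <;> ring)
    have hB2 : HasDerivAt (fun t : ℝ =>
        deriv (fun t : ℝ => K e t) t * Real.sin t + K e t * Real.cos t)
        (k2 * b + 2 * k1 * a - k * b) θs :=
      hasDerivAt_of_eq ((hu'd.hasDerivAt.mul (Real.hasDerivAt_sin θs)).add
        ((hud θs).hasDerivAt.mul (Real.hasDerivAt_cos θs))) (by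
        rw [hk2def, hk1def, hkdef, hadef, hbdef] <;> ring)
    have hWd : HasDerivAt (fun t : ℝ => Real.sin (K e t * Real.cos t) *
          (deriv (fun s : ℝ => K e s) t * Real.cos t - K e t * Real.sin t)
        + Real.sin (K e t * Real.sin t) *
          (deriv (fun s : ℝ => K e s) t * Real.sin t + K e t * Real.cos t))
        ((ca * (k1 * a - k * b)) * (k1 * a - k * b) + sa * (k2 * a - 2 * k1 * b - k * a)
         + ((cb * (k1 * b + k * a)) * (k1 * b + k * a) + sb * (k2 * b + 2 * k1 * a - k * b)))
        θs := by
      have h1 := (hA.sin.mul hA2).add (hB.sin.mul hB2)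
      apply hasDerivAt_of_eq h1
      rw [hsadef, hcadef, hsbdef, hcbdef, hkdef, hadef, hbdef] <;> ring
    have hW0 : (fun t : ℝ => Real.sin (K e t * Real.cos t) *
          (deriv (fun s : ℝ => K e s) t * Real.cos t - K e t * Real.sin t)
        + Real.sin (K e t * Real.sin t) *
          (deriv (fun s : ℝ => K e s) t * Real.sin t + K e t * Real.cos t))
        = fun _ : ℝ => (0:ℝ) := funext fun t => hR1 t
    rw [hW0] at hWd
    have h0 := hWd.unique (hasDerivAt_const θs (0:ℝ))
    linear_combination h0
  -- stationarity
  have R3 : k1 * (cp * a + sp * b) + k * (sp * a - cp * b) = 0 := by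
    have hΔ : HasDerivAt (fun t : ℝ => Real.cos (φ - t)) (Real.sin (φ - θs)) θs :=
      hasDerivAt_of_eq ((hasDerivAt_id' θs).const_sub φ).cos (by ring)
    have h : HasDerivAt (fun θ : ℝ => K e θ * Real.cos (φ - θ))
        (deriv (fun t : ℝ => K e t) θs * Real.cos (φ - θs) + K e θs * Real.sin (φ - θs)) θs :=
      (hud θs).hasDerivAt.mul hΔ
    have hd := h.deriv
    rw [hstat] at hd
    rw [Real.cos_sub, Real.sin_sub] at hd
    rw [hk1def, hkdef, hadef, hbdef, hspdef, hcpdef]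
    linear_combination -hd
  -- the second derivative of the phase
  have hf2 : iteratedDeriv 2 (fun θ : ℝ => -(K e θ * Real.cos (φ - θ))) θs
      = -(k2 * (cp * a + sp * b) + 2 * k1 * (sp * a - cp * b) - k * (cp * a + sp * b)) := by
    have hΔ : ∀ θ : ℝ, HasDerivAt (fun t : ℝ => Real.cos (φ - t)) (Real.sin (φ - θ)) θ :=
      fun θ => hasDerivAt_of_eq ((hasDerivAt_id' θ).const_sub φ).cos (by ring)
    have hΔ' : HasDerivAt (fun t : ℝ => Real.sin (φ - t)) (-Real.cos (φ - θs)) θs :=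
      hasDerivAt_of_eq ((hasDerivAt_id' θs).const_sub φ).sin (by ring)
    rw [iteratedDeriv_succ, iteratedDeriv_one]
    have hder : deriv (fun θ : ℝ => -(K e θ * Real.cos (φ - θ)))
        = fun θ : ℝ => -(deriv (fun t : ℝ => K e t) θ * Real.cos (φ - θ)
            + K e θ * Real.sin (φ - θ)) := by
      funext θ
      exact (((hud θ).hasDerivAt.mul (hΔ θ)).neg).deriv
    rw [hder]
    have h2 : HasDerivAt (fun θ : ℝ => -(deriv (fun t : ℝ => K e t) θ * Real.cos (φ - θ)
            + K e θ * Real.sin (φ - θ)))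
        (-(k2 * (cp * a + sp * b) + 2 * k1 * (sp * a - cp * b) - k * (cp * a + sp * b))) θs := by
      have h3 := ((hu'd.hasDerivAt.mul (hΔ θs)).add
        (((hud θs).hasDerivAt.mul hΔ'))).neg
      apply hasDerivAt_of_eq h3
      rw [Real.cos_sub, Real.sin_sub, hk2def, hk1def, hkdef, hadef, hbdef, hspdef, hcpdef]
      ring
    exact h2.deriv
  -- the e-derivative of K
  have hvD : v' * (a * sa + b * sb) = 1 := by
    have hA : HasDerivAt (fun e' : ℝ =>
        Real.cos (K e' θs * Real.cos θs) + Real.cos (K e' θs * Real.sin θs))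
        (-Real.sin (K e θs * Real.cos θs) * (deriv (fun e' : ℝ => K e' θs) e * Real.cos θs)
         + -Real.sin (K e θs * Real.sin θs) * (deriv (fun e' : ℝ => K e' θs) e * Real.sin θs)) e :=
      ((hvd.hasDerivAt.mul_const (Real.cos θs)).cos).add
        ((hvd.hasDerivAt.mul_const (Real.sin θs)).cos)
    have hev : (fun e' : ℝ => 2 - e') =ᶠ[nhds e] (fun e' : ℝ =>
        Real.cos (K e' θs * Real.cos θs) + Real.cos (K e' θs * Real.sin θs)) := by
      filter_upwards [isOpen_Ioo.eventually_mem he] with e' he'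
      exact ((hK e' he' θs).2.2).symm
    have h2 : HasDerivAt (fun e' : ℝ => 2 - e')
        (-Real.sin (K e θs * Real.cos θs) * (deriv (fun e' : ℝ => K e' θs) e * Real.cos θs)
         + -Real.sin (K e θs * Real.sin θs) * (deriv (fun e' : ℝ => K e' θs) e * Real.sin θs)) e :=
      hA.congr_of_eventuallyEq hev
    have h3 : HasDerivAt (fun e' : ℝ => 2 - e') (-1 : ℝ) e := by
      simpa using (hasDerivAt_id e).const_sub (2:ℝ)
    have h0 := h2.unique h3
    rw [← hkdef, ← hadef, ← hbdef, ← hsadef, ← hsbdef, ← hv'def] at h0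
    linear_combination -h0
  -- basic positivity facts
  have hD : 0 < a * sa + b * sb := by
    have h := Dpos θs k hk0 (by rw [← abs_eq_mul _ _ _ hk0]; exact hm0)
    rw [← hadef, ← hbdef, ← hsadef, ← hsbdef] at h
    linarith
  have S1 : k1 * (a * sa + b * sb) = k * (b * sa - a * sb) := by
    have h := hR1 θs
    rw [← hkdef, ← hk1def, ← hadef, ← hbdef, ← hsadef, ← hsbdef] at h
    linear_combination h
  have hS2 : sa * sp = sb * cp := by
    have h0 : k * (sa * sp - sb * cp) = 0 := by
      linear_combination (a * sa + b * sb) * R3 - (cp * a + sp * b) * S1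
        - k * (sa * sp - sb * cp) * Pyt1
    have := mul_eq_zero.mp h0
    rcases this with h | h
    · exact absurd h (ne_of_gt hk0)
    · linarith [sub_eq_zero.mp (by linarith : sa * sp - sb * cp = 0)]
  have hcΔ : cp * a + sp * b ≠ 0 := by
    intro h
    have hsΔ : sp * a - cp * b = 0 := by
      have h1 : k * (sp * a - cp * b) = 0 := by linear_combination R3 - k1 * h
      rcases mul_eq_zero.mp h1 with h2 | h2
      · exact absurd h2 (ne_of_gt hk0)
      · exact h2
    have habs : (1:ℝ) = 0 := by
      linear_combination (cp * a + sp * b) * h + (sp * a - cp * b) * hsΔ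
        - (sp ^ 2 + cp ^ 2) * Pyt1 - Pyt2
    exact absurd habs one_ne_zero
  have hα : (k1 * a - k * b) * (cp * a + sp * b) = -(k * sp) := by
    linear_combination a * R3 - k * sp * Pyt1
  have hβ : (k1 * b + k * a) * (cp * a + sp * b) = k * cp := by
    linear_combination b * R3 + k * cp * Pyt1
  have S4 : (a * sa + b * sb) * (ca * (k1 * a - k * b) ^ 2 + cb * (k1 * b + k * a) ^ 2)
      * (cp * a + sp * b) = k ^ 2 * (ca * sb * sp + cb * sa * cp) := by
    apply mul_left_cancel₀ hcΔ
    linear_combination ((a * sa + b * sb) * ca * ((k1 * a - k * b) * (cp * a + sp * b) - k * sp)) * hα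
      + ((a * sa + b * sb) * cb * ((k1 * b + k * a) * (cp * a + sp * b) + k * cp)) * hβ
      + k ^ 2 * (a * ca * sp - b * cb * cp) * hS2
  have hQ : k * ca * (k1 * a - k * b) ^ 2 + k * cb * (k1 * b + k * a) ^ 2
      + k * k2 * (a * sa + b * sb) - 2 * k1 ^ 2 * (a * sa + b * sb)
      - k ^ 2 * (a * sa + b * sb) = 0 := by
    linear_combination k * hR2 - 2 * k1 * S1
  have T : (k * (cp * a + sp * b) - k2 * (cp * a + sp * b) - 2 * k1 * (sp * a - cp * b))
      * (a * sa + b * sb) ^ 2 = k ^ 2 * (ca * sb * sp + cb * sa * cp) := by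
    apply mul_left_cancel₀ (ne_of_gt hk0)
    linear_combination (-(cp * a + sp * b) * (a * sa + b * sb)) * hQ
      - 2 * k1 * (a * sa + b * sb) ^ 2 * R3 + k * S4
  -- positivity of ψ
  have hψpos : 0 < ca * sb * sp + cb * sa * cp := by
    have hπ := Real.pi_pos
    have ha0 : 0 ≤ a := by
      rw [hadef]; exact Real.cos_nonneg_of_mem_Icc ⟨by linarith [hθs.1, hθs.2], hθs.2⟩
    have hb0 : 0 ≤ b := by
      rw [hbdef]; exact Real.sin_nonneg_of_nonneg_of_le_pi hθs.1 (by linarith [hθs.2])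
    have hmabs : k * a + k * b < Real.pi := by
      have h1 : |k * a| = k * a := abs_of_nonneg (by positivity)
      have h2 : |k * b| = k * b := abs_of_nonneg (by positivity)
      rw [h1, h2] at hm0; exact hm0
    have hsum : ca + cb = 2 - e := heq0
    have hsp0 : 0 ≤ sp := by
      rw [hspdef]; exact Real.sin_nonneg_of_nonneg_of_le_pi hφ.1 (by linarith [hφ.2, hπ])
    have hcp0 : 0 ≤ cp := by
      rw [hcpdef]; exact Real.cos_nonneg_of_mem_Icc ⟨by linarith [hφ.1, hπ], hφ.2⟩
    exact psi_pos k a b e sp cp hk0 ha0 hb0 Pyt1 hmabs hsum he.1 he.2 hS2 hsp0 hcp0 Pyt2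
  refine ⟨?_, hψpos⟩
  rw [hf2]
  linear_combination v' ^ 2 * T
    - (k * (cp * a + sp * b) - k2 * (cp * a + sp * b) - 2 * k1 * (sp * a - cp * b))
      * (v' * (a * sa + b * sb) + 1) * hvD
end
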